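/- arXiv:1801.04835 — 4 statements merged into one kernel-verified Lean document; each statement's English description precedes it below -/
import Mathlib

section
/- Fix an integer s ≥ 2 and a real λ with 0 < λ < 1/((2s−1)² − 2). For n ≥ s let Ω_n be the set of (1,s)-tilings of the square region R_n = {0,…,n−1}² ⊆ ℤ² and let N = n². Let P be the transition matrix of the weighted central-flip chain MC_{(1,s)-square} on Ω_n: P(T,T') = 1/(N(λ+1)) if T' is obtained from T by replacing one s×s tile with s² unit tiles; P(T,T') = λ/(N(λ+1)) if T' is obtained from T by replacing s² unit tiles filling an s×s square with one s×s tile; P(T,T') = 0 for all other T' ≠ T; and P(T,T) = 1 − Σ_{T'≠T} P(T,T'). Its stationary distribution is π(T) = λ^{b(T)}/Z where b(T) is the number of s×s tiles of T and Z = Σ_{T ∈ Ω_n} λ^{b(T)}. Then the chain is rapidly mixing: there is a constant c > 0 (depending only on s and λ) such that for all n ≥ s and all ε ∈ (0,1), τ_mix(ε) ≤ c · n⁴ · ln(n/ε). -/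
open Finset

/-- The k×k square of cells with lower-left corner `p`. -/
def sqCells (p : ℤ × ℤ) (k : ℕ) : Finset (ℤ × ℤ) :=
  (Finset.range k ×ˢ Finset.range k).image fun ij => (p.1 + ij.1, p.2 + ij.2)

/-- `T` is an (m,s)-tiling of the finite region `R`. -/
def IsTiling (m s : ℕ) (R : Finset (ℤ × ℤ)) (T : Finset ((ℤ × ℤ) × ℕ)) : Prop :=
  (∀ t ∈ T, t.2 = m ∨ t.2 = s) ∧
  (∀ t ∈ T, ∀ t' ∈ T, t ≠ t' → Disjoint (sqCells t.1 t.2) (sqCells t'.1 t'.2)) ∧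
  T.biUnion (fun t => sqCells t.1 t.2) = R

/-- `T'` is obtained from `T` by replacing one s×s tile by s² unit tiles. -/
def centralFlipTo (s : ℕ) (T T' : Finset ((ℤ × ℤ) × ℕ)) : Prop :=
  ∃ p : ℤ × ℤ, (p, s) ∈ T ∧
    T' = (T.erase (p, s)) ∪ (sqCells p s).image (fun q => (q, 1))

/-- `T` and `T'` differ by a central flip. -/
def CentralFlip (s : ℕ) (T T' : Finset ((ℤ × ℤ) × ℕ)) : Prop :=
  centralFlipTo s T T' ∨ centralFlipTo s T' T

/-- `t`-step transition probabilities of the kernel `P` on the finite state space `Ω`. -/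
noncomputable def matPow {X : Type*} [DecidableEq X] (Ω : Finset X) (P : X → X → ℝ) :
    ℕ → X → X → ℝ
  | 0 => fun x y => if x = y then 1 else 0
  | t + 1 => fun x y => ∑ z ∈ Ω, matPow Ω P t x z * P z y

/-- Total variation distance between two distributions on `Ω`. -/
noncomputable def dTV {X : Type*} (Ω : Finset X) (μ ν : X → ℝ) : ℝ :=
  (1 / 2) * ∑ y ∈ Ω, |μ y - ν y|

/-- Mixing time: the maximum over starting states `x ∈ Ω` of the least `t` such that the
total variation distance from the distribution `π` is at most `ε` from time `t` on. -/
noncomputable def mixingTime {X : Type*} [DecidableEq X] (Ω : Finset X) (P : X → X → ℝ)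
    (π : X → ℝ) (ε : ℝ) : ℕ :=
  Ω.sup fun x => sInf {t | ∀ t' ≥ t, dTV Ω (fun y => matPow Ω P t' x y) π ≤ ε}

/-- The n×n square region in ℤ². -/
def squareRegion (n : ℕ) : Finset (ℤ × ℤ) :=
  (Finset.range n ×ˢ Finset.range n).image fun ij => ((ij.1 : ℤ), (ij.2 : ℤ))

/-- The number of s×s tiles of a tiling `T`. -/
def bigCount (s : ℕ) (T : Finset ((ℤ × ℤ) × ℕ)) : ℕ :=
  (T.filter fun t => t.2 = s).card

-- ### auxiliary development


abbrev Tl := (ℤ × ℤ) × ℕ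
abbrev St := Finset Tl

def unitsImg (p : ℤ × ℤ) (s : ℕ) : St := (sqCells p s).image (fun q => (q, 1))

def splitT (s : ℕ) (x : St) (p : ℤ × ℤ) : St := x.erase (p, s) ∪ unitsImg p s

def mergeT (s : ℕ) (x : St) (p : ℤ × ℤ) : St := (x \ unitsImg p s) ∪ {(p, s)}

def bigs (s : ℕ) (x : St) : Finset (ℤ × ℤ) := (x.filter (fun t => t.2 = s)).image Prod.fst

def freeS (s n : ℕ) (x : St) : Finset (ℤ × ℤ) :=
  (squareRegion n).filter (fun r => unitsImg r s ⊆ x)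

-- ### basic lemmas

lemma mem_sqCells {a p : ℤ × ℤ} {k : ℕ} :
    a ∈ sqCells p k ↔ p.1 ≤ a.1 ∧ a.1 < p.1 + k ∧ p.2 ≤ a.2 ∧ a.2 < p.2 + k := by
  simp only [sqCells, mem_image, mem_product, mem_range, Prod.exists]
  constructor
  · rintro ⟨i, j, ⟨hi, hj⟩, rfl⟩
    simp only []
    omega
  · rintro ⟨h1, h2, h3, h4⟩
    refine ⟨(a.1 - p.1).toNat, (a.2 - p.2).toNat, ⟨by omega, by omega⟩, ?_⟩
    have : ((a.1 - p.1).toNat : ℤ) = a.1 - p.1 := by omega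
    have h2' : ((a.2 - p.2).toNat : ℤ) = a.2 - p.2 := by omega
    rw [this, h2']
    simp

lemma self_mem_sqCells {p : ℤ × ℤ} {k : ℕ} (hk : 0 < k) : p ∈ sqCells p k := by
  rw [mem_sqCells]; omega

lemma sqCells_one {p : ℤ × ℤ} : sqCells p 1 = {p} := by
  ext a; rw [mem_sqCells, mem_singleton]
  constructor
  · intro h; ext <;> omega
  · rintro rfl; omega

lemma card_sqCells_le {p : ℤ × ℤ} {k : ℕ} : (sqCells p k).card ≤ k ^ 2 := by
  calc (sqCells p k).card ≤ (Finset.range k ×ˢ Finset.range k).card := card_image_le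
  _ = k ^ 2 := by simp [sq]

lemma mem_unitsImg {t : Tl} {p : ℤ × ℤ} {s : ℕ} :
    t ∈ unitsImg p s ↔ t.2 = 1 ∧ t.1 ∈ sqCells p s := by
  simp only [unitsImg, mem_image]
  constructor
  · rintro ⟨q, hq, rfl⟩; exact ⟨rfl, hq⟩
  · rintro ⟨h1, h2⟩; exact ⟨t.1, h2, by rw [← h1]⟩

lemma card_squareRegion_le {n : ℕ} : (squareRegion n).card ≤ n ^ 2 := by
  calc (squareRegion n).card ≤ (Finset.range n ×ˢ Finset.range n).card := card_image_le
  _ = n ^ 2 := by simp [sq]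

section Tiling

variable {s n : ℕ} {R : Finset (ℤ × ℤ)} {x : St} {p q r : ℤ × ℤ}

lemma tile_sizes (hx : IsTiling 1 s R x) {t : Tl} (ht : t ∈ x) : t.2 = 1 ∨ t.2 = s := hx.1 t ht

/-- A big tile and a unit tile inside its square cannot coexist. -/
lemma big_no_unit (hs : 2 ≤ s) (hx : IsTiling 1 s R x) (hp : (p, s) ∈ x)
    (hq : q ∈ sqCells p s) : (q, 1) ∉ x := by
  intro hq1
  have hne : ((q, 1) : Tl) ≠ (p, s) := by
    intro h; have := congrArg Prod.snd h; simp at this; omega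
  have hdisj := hx.2.1 _ hq1 _ hp hne
  have : q ∈ sqCells q 1 := self_mem_sqCells one_pos
  exact (Finset.disjoint_left.mp hdisj) (by simpa [sqCells_one]) hq

lemma mem_freeS : r ∈ freeS s n x ↔ r ∈ squareRegion n ∧ unitsImg r s ⊆ x := by
  simp [freeS]

lemma free_big_not_mem (hs : 2 ≤ s) (hx : IsTiling 1 s (squareRegion n) x)
    (hr : r ∈ freeS s n x) : (r, s) ∉ x := by
  intro hrs
  have h1 : ((r, 1) : Tl) ∈ unitsImg r s := by
    rw [mem_unitsImg]; exact ⟨rfl, self_mem_sqCells (by omega)⟩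
  exact big_no_unit hs hx hrs (self_mem_sqCells (by omega)) ((mem_freeS.mp hr).2 h1)

lemma big_mem_region (hx : IsTiling 1 s R x) (hp : (p, s) ∈ x) : sqCells p s ⊆ R := by
  rw [← hx.2.2]
  intro a ha
  exact Finset.mem_biUnion.mpr ⟨(p, s), hp, ha⟩

lemma mem_bigs : q ∈ bigs s x ↔ (q, s) ∈ x := by
  simp only [bigs, mem_image, mem_filter]
  constructor
  · rintro ⟨t, ⟨ht, h2⟩, rfl⟩
    have : t = (t.1, s) := by rw [← h2]
    rwa [← this]
  · intro h; exact ⟨(q, s), ⟨h, rfl⟩, rfl⟩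

lemma bigCount_eq_card_bigs : bigCount s x = (bigs s x).card := by
  rw [bigCount, bigs, Finset.card_image_of_injOn]
  intro t ht t' ht' h
  simp only [mem_coe, mem_filter] at ht ht'
  exact Prod.ext h (ht.2.trans ht'.2.symm)

/-- Big squares of a tiling are pairwise disjoint cells, so two distinct big positions
give disjoint squares. -/
lemma bigs_disjoint (hx : IsTiling 1 s R x) (hp : (p, s) ∈ x) (hq : (q, s) ∈ x)
    (hne : p ≠ q) : Disjoint (sqCells p s) (sqCells q s) :=
  hx.2.1 (p, s) hp (q, s) hq (by simp [hne])

/-- A free square is cell-disjoint from any big tile. -/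
lemma free_disjoint_big (hs : 2 ≤ s) (hx : IsTiling 1 s (squareRegion n) x)
    (hp : (p, s) ∈ x) (hr : r ∈ freeS s n x) : Disjoint (sqCells r s) (sqCells p s) := by
  rw [Finset.disjoint_left]
  intro a har hap
  have : ((a, 1) : Tl) ∈ x := (mem_freeS.mp hr).2 (by rw [mem_unitsImg]; exact ⟨rfl, har⟩)
  exact big_no_unit hs hx hp hap this

/-- Any tile of `x` other than the units inside `S(r,s)` is cell-disjoint from `S(r,s)`,
when `r` is free. -/
lemma free_disjoint_tile (hs : 2 ≤ s) (hx : IsTiling 1 s (squareRegion n) x)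
    (hr : r ∈ freeS s n x) {t : Tl} (ht : t ∈ x) (htu : t ∉ unitsImg r s) :
    Disjoint (sqCells t.1 t.2) (sqCells r s) := by
  rw [Finset.disjoint_left]
  intro a hat har
  have hu : ((a, 1) : Tl) ∈ x := (mem_freeS.mp hr).2 (by rw [mem_unitsImg]; exact ⟨rfl, har⟩)
  have hne : t ≠ (a, 1) := by
    rintro rfl
    exact htu (by rw [mem_unitsImg]; exact ⟨rfl, har⟩)
  have hdisj := hx.2.1 t ht _ hu hne
  exact (Finset.disjoint_left.mp hdisj) hat (by simpa [sqCells_one])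

lemma not_mem_unitsImg_big (hs : 2 ≤ s) : ((q, s) : Tl) ∉ unitsImg p s := by
  rw [mem_unitsImg]; rintro ⟨h, -⟩; simp at h; omega

end Tiling

section SplitMerge

variable {s n : ℕ} {R : Finset (ℤ × ℤ)} {x : St} {p q r : ℤ × ℤ}

lemma mem_splitT {t : Tl} : t ∈ splitT s x p ↔ (t ∈ x ∧ t ≠ (p, s)) ∨ t ∈ unitsImg p s := by
  simp [splitT, mem_erase, and_comm]

lemma mem_mergeT {t : Tl} : t ∈ mergeT s x r ↔ (t ∈ x ∧ t ∉ unitsImg r s) ∨ t = (r, s) := by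
  simp [mergeT, mem_sdiff]
  tauto

lemma big_mem_mergeT : ((r, s) : Tl) ∈ mergeT s x r := mem_mergeT.mpr (Or.inr rfl)

lemma big_not_mem_splitT (hs : 2 ≤ s) : ((p, s) : Tl) ∉ splitT s x p := by
  rw [mem_splitT]
  rintro (⟨-, h⟩ | h)
  · exact h rfl
  · exact not_mem_unitsImg_big hs h

lemma splitT_isTiling (hs : 2 ≤ s) (hx : IsTiling 1 s R x) (hp : (p, s) ∈ x) :
    IsTiling 1 s R (splitT s x p) := by
  obtain ⟨hsz, hdj, hun⟩ := hx
  refine ⟨?_, ?_, ?_⟩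
  · intro t ht
    rcases mem_splitT.mp ht with ⟨h, -⟩ | h
    · exact hsz t h
    · exact Or.inl (mem_unitsImg.mp h).1
  · intro t ht t' ht' hne
    rcases mem_splitT.mp ht with ⟨h1, h1'⟩ | h1 <;>
      rcases mem_splitT.mp ht' with ⟨h2, h2'⟩ | h2
    · exact hdj t h1 t' h2 hne
    · -- t ∈ x (not the big), t' a unit of S(p,s)
      obtain ⟨e1, e2⟩ := mem_unitsImg.mp h2
      have hd : Disjoint (sqCells t.1 t.2) (sqCells p s) := hdj t h1 (p, s) hp (by simpa)
      have : sqCells t'.1 t'.2 = {t'.1} := by rw [e1, sqCells_one]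
      rw [this]
      exact Finset.disjoint_singleton_right.mpr fun h => (Finset.disjoint_left.mp hd) h e2
    · obtain ⟨e1, e2⟩ := mem_unitsImg.mp h1
      have hd : Disjoint (sqCells t'.1 t'.2) (sqCells p s) := hdj t' h2 (p, s) hp (by simpa)
      have : sqCells t.1 t.2 = {t.1} := by rw [e1, sqCells_one]
      rw [this]
      exact (Finset.disjoint_singleton_right.mpr fun h => (Finset.disjoint_left.mp hd) h e2).symm
    · obtain ⟨e1, e2⟩ := mem_unitsImg.mp h1
      obtain ⟨f1, f2⟩ := mem_unitsImg.mp h2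
      have h1q : sqCells t.1 t.2 = {t.1} := by rw [e1, sqCells_one]
      have h2q : sqCells t'.1 t'.2 = {t'.1} := by rw [f1, sqCells_one]
      rw [h1q, h2q, Finset.disjoint_singleton]
      intro hq
      exact hne (Prod.ext hq (e1.trans f1.symm))
  · ext a
    simp only [mem_biUnion]
    constructor
    · rintro ⟨t, ht, hat⟩
      rcases mem_splitT.mp ht with ⟨h, -⟩ | h
      · rw [← hun]; exact mem_biUnion.mpr ⟨t, h, hat⟩
      · obtain ⟨e1, e2⟩ := mem_unitsImg.mp h
        rw [e1, sqCells_one, mem_singleton] at hat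
        subst hat
        exact big_mem_region ⟨hsz, hdj, hun⟩ hp e2
    · intro ha
      rw [← hun] at ha
      obtain ⟨t, ht, hat⟩ := mem_biUnion.mp ha
      by_cases htp : t = (p, s)
      · subst htp
        refine ⟨(a, 1), mem_splitT.mpr (Or.inr (mem_unitsImg.mpr ⟨rfl, hat⟩)), ?_⟩
        simp [sqCells_one]
      · exact ⟨t, mem_splitT.mpr (Or.inl ⟨ht, htp⟩), hat⟩

lemma mergeT_isTiling (hs : 2 ≤ s) (hx : IsTiling 1 s (squareRegion n) x)
    (hr : r ∈ freeS s n x) : IsTiling 1 s (squareRegion n) (mergeT s x r) := by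
  obtain ⟨hsz, hdj, hun⟩ := hx
  have hx' : IsTiling 1 s (squareRegion n) x := ⟨hsz, hdj, hun⟩
  refine ⟨?_, ?_, ?_⟩
  · intro t ht
    rcases mem_mergeT.mp ht with ⟨h, -⟩ | h
    · exact hsz t h
    · subst h; exact Or.inr rfl
  · intro t ht t' ht' hne
    rcases mem_mergeT.mp ht with ⟨h1, h1'⟩ | h1 <;>
      rcases mem_mergeT.mp ht' with ⟨h2, h2'⟩ | h2
    · exact hdj t h1 t' h2 hne
    · subst h2; exact free_disjoint_tile hs hx' hr h1 h1'
    · subst h1; exact (free_disjoint_tile hs hx' hr h2 h2').symm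
    · exact absurd (h1.trans h2.symm) hne
  · ext a
    simp only [mem_biUnion]
    constructor
    · rintro ⟨t, ht, hat⟩
      rcases mem_mergeT.mp ht with ⟨h, -⟩ | h
      · rw [← hun]; exact mem_biUnion.mpr ⟨t, h, hat⟩
      · subst h
        have : ((a, 1) : Tl) ∈ x := (mem_freeS.mp hr).2 (mem_unitsImg.mpr ⟨rfl, hat⟩)
        rw [← hun]
        exact mem_biUnion.mpr ⟨(a, 1), this, by simp [sqCells_one]⟩
    · intro ha
      rw [← hun] at ha
      obtain ⟨t, ht, hat⟩ := mem_biUnion.mp ha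
      by_cases htu : t ∈ unitsImg r s
      · obtain ⟨e1, e2⟩ := mem_unitsImg.mp htu
        rw [e1, sqCells_one, mem_singleton] at hat
        subst hat
        exact ⟨(r, s), big_mem_mergeT, e2⟩
      · exact ⟨t, mem_mergeT.mpr (Or.inl ⟨ht, htu⟩), hat⟩

lemma splitT_mergeT (hs : 2 ≤ s) (hx : IsTiling 1 s (squareRegion n) x)
    (hr : r ∈ freeS s n x) : splitT s (mergeT s x r) r = x := by
  have hrs : ((r, s) : Tl) ∉ x := free_big_not_mem hs hx hr
  have hU : unitsImg r s ⊆ x := (mem_freeS.mp hr).2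
  ext t
  rw [mem_splitT, mem_mergeT]
  constructor
  · rintro (⟨(⟨h1, -⟩ | h1), h2⟩ | h)
    · exact h1
    · exact absurd h1 h2
    · exact hU h
  · intro ht
    by_cases htu : t ∈ unitsImg r s
    · exact Or.inr htu
    · exact Or.inl ⟨Or.inl ⟨ht, htu⟩, fun h => hrs (h ▸ ht)⟩

lemma mergeT_splitT (hs : 2 ≤ s) (hx : IsTiling 1 s R x) (hp : (p, s) ∈ x) :
    mergeT s (splitT s x p) p = x := by
  have hnu : ∀ t ∈ x, t ≠ (p, s) → t ∉ unitsImg p s := by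
    intro t ht hne htu
    obtain ⟨e1, e2⟩ := mem_unitsImg.mp htu
    have : t = (t.1, 1) := by rw [← e1]
    rw [this] at ht
    exact big_no_unit hs hx hp e2 ht
  ext t
  rw [mem_mergeT, mem_splitT]
  constructor
  · rintro (⟨(⟨h1, -⟩ | h1), h2⟩ | h)
    · exact h1
    · exact absurd h1 h2
    · exact h ▸ hp
  · intro ht
    by_cases htp : t = (p, s)
    · exact Or.inr htp
    · exact Or.inl ⟨Or.inl ⟨ht, htp⟩, hnu t ht htp⟩

lemma flipTo_splitT (hp : (p, s) ∈ x) : centralFlipTo s x (splitT s x p) := ⟨p, hp, rfl⟩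

lemma flipTo_mergeT (hs : 2 ≤ s) (hx : IsTiling 1 s (squareRegion n) x)
    (hr : r ∈ freeS s n x) : centralFlipTo s (mergeT s x r) x :=
  ⟨r, big_mem_mergeT, (splitT_mergeT hs hx hr).symm⟩

lemma flipTo_from_iff (hs : 2 ≤ s) {z : St} (hz : IsTiling 1 s (squareRegion n) z)
    (hflip : centralFlipTo s z x) : ∃ r ∈ freeS s n x, z = mergeT s x r := by
  obtain ⟨r, hrz, hxe⟩ := hflip
  have hxe' : x = splitT s z r := hxe
  refine ⟨r, ?_, ?_⟩
  · rw [mem_freeS]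
    constructor
    · exact big_mem_region hz hrz (self_mem_sqCells (by omega))
    · intro t ht
      rw [hxe', mem_splitT]
      exact Or.inr ht
  · rw [hxe', mergeT_splitT hs hz hrz]

lemma bigs_splitT (hs : 2 ≤ s) : bigs s (splitT s x p) = (bigs s x).erase p := by
  ext a
  rw [mem_bigs, mem_erase, mem_splitT, mem_bigs]
  constructor
  · rintro (⟨h1, h2⟩ | h)
    · exact ⟨fun h => h2 (by rw [h]), h1⟩
    · exact absurd h (not_mem_unitsImg_big hs)
  · rintro ⟨h1, h2⟩
    exact Or.inl ⟨h2, fun h => h1 (congrArg Prod.fst h)⟩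

lemma bigCount_splitT (hs : 2 ≤ s) (hp : (p, s) ∈ x) :
    bigCount s (splitT s x p) = bigCount s x - 1 := by
  rw [bigCount_eq_card_bigs, bigCount_eq_card_bigs, bigs_splitT hs]
  exact Finset.card_erase_of_mem (mem_bigs.mpr hp)

end SplitMerge

section Comm

variable {s n : ℕ} {x : St} {p q r : ℤ × ℤ}

lemma unit_ne_big {t : Tl} (hs : 2 ≤ s) (h : t ∈ unitsImg p s) : t ≠ (q, s) := by
  rintro rfl
  exact not_mem_unitsImg_big hs h

lemma mem_splitT_splitT {t : Tl} (hs : 2 ≤ s) :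
    t ∈ splitT s (splitT s x p) q ↔
      (t ∈ x ∧ t ≠ (p, s) ∧ t ≠ (q, s)) ∨ t ∈ unitsImg p s ∨ t ∈ unitsImg q s := by
  rw [mem_splitT, mem_splitT]
  constructor
  · rintro (⟨⟨h1, h2⟩ | h1, h3⟩ | h)
    · exact Or.inl ⟨h1, h2, h3⟩
    · exact Or.inr (Or.inl h1)
    · exact Or.inr (Or.inr h)
  · rintro (⟨h1, h2, h3⟩ | h | h)
    · exact Or.inl ⟨Or.inl ⟨h1, h2⟩, h3⟩
    · exact Or.inl ⟨Or.inr h, unit_ne_big hs h⟩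
    · exact Or.inr h

lemma splitT_comm (hs : 2 ≤ s) :
    splitT s (splitT s x p) q = splitT s (splitT s x q) p := by
  ext t
  rw [mem_splitT_splitT hs, mem_splitT_splitT hs]
  tauto

lemma merge_split_comm (hs : 2 ≤ s) (hx : IsTiling 1 s (squareRegion n) x)
    (hp : (p, s) ∈ x) (hr : r ∈ freeS s n x) :
    mergeT s (splitT s x p) r = splitT s (mergeT s x r) p := by
  have hrp : r ≠ p := by
    rintro rfl
    exact free_big_not_mem hs hx hr hp
  have hUrUp : ∀ t : Tl, t ∈ unitsImg p s → t ∉ unitsImg r s := by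
    intro t h1 h2
    obtain ⟨e1, e2⟩ := mem_unitsImg.mp h1
    obtain ⟨f1, f2⟩ := mem_unitsImg.mp h2
    exact (Finset.disjoint_left.mp (free_disjoint_big hs hx hp hr)) f2 e2
  ext t
  rw [mem_mergeT, mem_splitT, mem_splitT, mem_mergeT]
  constructor
  · rintro (⟨⟨h1, h2⟩ | h1, h3⟩ | h)
    · exact Or.inl ⟨Or.inl ⟨h1, h3⟩, h2⟩
    · exact Or.inr h1
    · subst h
      exact Or.inl ⟨Or.inr rfl, fun h => hrp (congrArg Prod.fst h)⟩
  · rintro (⟨⟨h1, h2⟩ | h1, h3⟩ | h)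
    · exact Or.inl ⟨Or.inl ⟨h1, h3⟩, h2⟩
    · subst h1; exact Or.inr rfl
    · exact Or.inl ⟨Or.inr h, hUrUp t h⟩

lemma not_mem_freeS_self (hs : 2 ≤ s) (hx : IsTiling 1 s (squareRegion n) x)
    (hp : (p, s) ∈ x) : p ∉ freeS s n x := by
  intro h
  exact free_big_not_mem hs hx h hp

lemma insert_subset_freeS_splitT (hs : 2 ≤ s) (hx : IsTiling 1 s (squareRegion n) x)
    (hp : (p, s) ∈ x) :
    insert p (freeS s n x) ⊆ freeS s n (splitT s x p) := by
  intro r hr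
  rw [mem_freeS]
  rcases Finset.mem_insert.mp hr with rfl | hr
  · refine ⟨big_mem_region hx hp (self_mem_sqCells (by omega)), ?_⟩
    intro t ht
    exact mem_splitT.mpr (Or.inr ht)
  · rw [mem_freeS] at hr
    refine ⟨hr.1, ?_⟩
    intro t ht
    exact mem_splitT.mpr (Or.inl ⟨hr.2 ht, unit_ne_big hs ht⟩)

/-- new free squares after a split overlap the split square. -/
lemma new_free_overlaps (hs : 2 ≤ s) (hx : IsTiling 1 s (squareRegion n) x)
    (hp : (p, s) ∈ x) (hr : r ∈ freeS s n (splitT s x p))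
    (hr2 : r ∉ insert p (freeS s n x)) :
    ¬ Disjoint (sqCells r s) (sqCells p s) := by
  intro hdisj
  rw [Finset.mem_insert, not_or] at hr2
  apply hr2.2
  rw [mem_freeS] at hr ⊢
  refine ⟨hr.1, ?_⟩
  intro t ht
  obtain ⟨e1, e2⟩ := mem_unitsImg.mp ht
  rcases mem_splitT.mp (hr.2 ht) with ⟨h1, -⟩ | h1
  · exact h1
  · obtain ⟨f1, f2⟩ := mem_unitsImg.mp h1
    exact absurd f2 (fun h => (Finset.disjoint_left.mp hdisj) e2 h)

lemma overlap_mem_box (hs : 2 ≤ s)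
    (h : ¬ Disjoint (sqCells r s) (sqCells p s)) :
    r ∈ sqCells (p.1 - (s - 1 : ℕ), p.2 - (s - 1 : ℕ)) (2 * s - 1) := by
  rw [Finset.not_disjoint_iff] at h
  obtain ⟨a, ha1, ha2⟩ := h
  rw [mem_sqCells] at ha1 ha2 ⊢
  simp only []
  have h1 : ((s - 1 : ℕ) : ℤ) = (s : ℤ) - 1 := by
    have : 1 ≤ s := by omega
    push_cast [Nat.cast_sub this]; ring
  have h2 : ((2 * s - 1 : ℕ) : ℤ) = 2 * (s : ℤ) - 1 := by
    have : 1 ≤ 2 * s := by omega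
    push_cast [Nat.cast_sub this]; ring
  rw [h1, h2]
  omega

end Comm

section Chain

variable {s n : ℕ} {Ω : Finset St} {P : St → St → ℝ} {lam : ℝ} {x : St} {p q r : ℤ × ℤ}

/-- One-step operator on functions. -/
noncomputable def Pop (Ω : Finset St) (P : St → St → ℝ) (f : St → ℝ) (x : St) : ℝ :=
  ∑ z ∈ Ω, P x z * f z

def nbrs (s n : ℕ) (x : St) : Finset St :=
  (bigs s x).image (splitT s x) ∪ (freeS s n x).image (mergeT s x)

lemma splitT_ne_self (hs : 2 ≤ s) (hq : (q, s) ∈ x) : splitT s x q ≠ x := by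
  intro h
  exact big_not_mem_splitT hs (h ▸ hq)

lemma mergeT_ne_self (hs : 2 ≤ s) (hx : IsTiling 1 s (squareRegion n) x)
    (hr : r ∈ freeS s n x) : mergeT s x r ≠ x := by
  intro h
  exact free_big_not_mem hs hx hr (h ▸ big_mem_mergeT)

lemma splitT_injOn (hs : 2 ≤ s) {q₁ q₂ : ℤ × ℤ} (h1 : (q₁, s) ∈ x) (h2 : (q₂, s) ∈ x)
    (hne : q₁ ≠ q₂) : splitT s x q₁ ≠ splitT s x q₂ := by
  intro h
  have : ((q₂, s) : Tl) ∈ splitT s x q₁ :=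
    mem_splitT.mpr (Or.inl ⟨h2, fun hh => hne (congrArg Prod.fst hh).symm⟩)
  rw [h] at this
  exact big_not_mem_splitT hs this

lemma mergeT_injOn (hs : 2 ≤ s) (hx : IsTiling 1 s (squareRegion n) x) {r₁ r₂ : ℤ × ℤ}
    (h1 : r₁ ∈ freeS s n x) (h2 : r₂ ∈ freeS s n x) (hne : r₁ ≠ r₂) :
    mergeT s x r₁ ≠ mergeT s x r₂ := by
  intro h
  have : ((r₁, s) : Tl) ∈ mergeT s x r₂ := h ▸ big_mem_mergeT
  rcases mem_mergeT.mp this with ⟨hh, -⟩ | hh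
  · exact free_big_not_mem hs hx h1 hh
  · exact hne (congrArg Prod.fst hh)

lemma splitT_ne_mergeT (hs : 2 ≤ s) (hx : IsTiling 1 s (squareRegion n) x)
    (hq : (q, s) ∈ x) (hr : r ∈ freeS s n x) : splitT s x q ≠ mergeT s x r := by
  intro h
  have : ((r, s) : Tl) ∈ splitT s x q := h ▸ big_mem_mergeT
  rcases mem_splitT.mp this with ⟨hh, -⟩ | hh
  · exact free_big_not_mem hs hx hr hh
  · exact not_mem_unitsImg_big hs hh

lemma nbrs_subset (hs : 2 ≤ s)
    (hΩ : ∀ T, T ∈ Ω ↔ IsTiling 1 s (squareRegion n) T) (hx : x ∈ Ω) :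
    nbrs s n x ⊆ Ω.erase x := by
  intro z hz
  have hxt : IsTiling 1 s (squareRegion n) x := (hΩ x).mp hx
  rcases Finset.mem_union.mp hz with hz | hz
  · obtain ⟨a, ha, rfl⟩ := Finset.mem_image.mp hz
    rw [mem_bigs] at ha
    exact Finset.mem_erase.mpr ⟨splitT_ne_self hs ha,
      (hΩ _).mpr (splitT_isTiling hs hxt ha)⟩
  · obtain ⟨a, ha, rfl⟩ := Finset.mem_image.mp hz
    exact Finset.mem_erase.mpr ⟨mergeT_ne_self hs hxt ha,
      (hΩ _).mpr (mergeT_isTiling hs hxt ha)⟩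

lemma mem_nbrs_of_flip (hs : 2 ≤ s)
    (hΩ : ∀ T, T ∈ Ω ↔ IsTiling 1 s (squareRegion n) T) (hx : x ∈ Ω) {z : St}
    (hzΩ : z ∈ Ω) (hf : CentralFlip s x z) : z ∈ nbrs s n x := by
  rcases hf with ⟨a, ha, hz⟩ | hf
  · exact Finset.mem_union_left _
      (Finset.mem_image.mpr ⟨a, mem_bigs.mpr ha, hz.symm⟩)
  · obtain ⟨a, ha, hz⟩ := flipTo_from_iff hs ((hΩ z).mp hzΩ) hf
    exact Finset.mem_union_right _ (Finset.mem_image.mpr ⟨a, ha, hz.symm⟩)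

/-- The off-diagonal sum decomposition. -/
lemma sum_erase_eq (hs : 2 ≤ s)
    (hΩ : ∀ T, T ∈ Ω ↔ IsTiling 1 s (squareRegion n) T)
    (h2 : ∀ T ∈ Ω, ∀ T' ∈ Ω, centralFlipTo s T T' → P T T' = 1 / ((n:ℝ)^2 * (lam+1)))
    (h3 : ∀ T ∈ Ω, ∀ T' ∈ Ω, centralFlipTo s T' T → P T T' = lam / ((n:ℝ)^2 * (lam+1)))
    (h4 : ∀ T ∈ Ω, ∀ T' ∈ Ω, T ≠ T' → ¬ CentralFlip s T T' → P T T' = 0)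
    (hx : x ∈ Ω) (g : St → ℝ) :
    ∑ z ∈ Ω.erase x, P x z * g z =
      (1 / ((n:ℝ)^2 * (lam+1))) * ∑ a ∈ bigs s x, g (splitT s x a) +
      (lam / ((n:ℝ)^2 * (lam+1))) * ∑ a ∈ freeS s n x, g (mergeT s x a) := by
  have hxt : IsTiling 1 s (squareRegion n) x := (hΩ x).mp hx
  rw [← Finset.sum_subset (nbrs_subset hs hΩ hx) (fun z hz hz2 => ?_)]
  · rw [nbrs, Finset.sum_union ?hdisj]
    case hdisj =>
      rw [Finset.disjoint_left]
      rintro z hz1 hz2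
      obtain ⟨a, ha, rfl⟩ := Finset.mem_image.mp hz1
      obtain ⟨b, hb, hz⟩ := Finset.mem_image.mp hz2
      exact splitT_ne_mergeT hs hxt (mem_bigs.mp ha) hb hz.symm
    rw [Finset.sum_image (fun a ha b hb hab => by
          by_contra hne
          exact splitT_injOn hs (mem_bigs.mp ha) (mem_bigs.mp hb) hne hab),
        Finset.sum_image (fun a ha b hb hab => by
          by_contra hne
          exact mergeT_injOn hs hxt ha hb hne hab)]
    rw [Finset.mul_sum, Finset.mul_sum]
    congr 1
    · refine Finset.sum_congr rfl (fun a ha => ?_)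
      rw [mem_bigs] at ha
      rw [h2 x hx _ ((hΩ _).mpr (splitT_isTiling hs hxt ha)) (flipTo_splitT ha)]
    · refine Finset.sum_congr rfl (fun a ha => ?_)
      rw [h3 x hx _ ((hΩ _).mpr (mergeT_isTiling hs hxt ha)) (flipTo_mergeT hs hxt ha)]
  · have hzΩ : z ∈ Ω := (Finset.mem_erase.mp hz).2
    have hzx : z ≠ x := (Finset.mem_erase.mp hz).1
    rw [h4 x hx z hzΩ (Ne.symm hzx) (fun hf => hz2 (mem_nbrs_of_flip hs hΩ hx hzΩ hf)),
      zero_mul]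

lemma Pop_eq (hs : 2 ≤ s)
    (hΩ : ∀ T, T ∈ Ω ↔ IsTiling 1 s (squareRegion n) T)
    (h2 : ∀ T ∈ Ω, ∀ T' ∈ Ω, centralFlipTo s T T' → P T T' = 1 / ((n:ℝ)^2 * (lam+1)))
    (h3 : ∀ T ∈ Ω, ∀ T' ∈ Ω, centralFlipTo s T' T → P T T' = lam / ((n:ℝ)^2 * (lam+1)))
    (h4 : ∀ T ∈ Ω, ∀ T' ∈ Ω, T ≠ T' → ¬ CentralFlip s T T' → P T T' = 0)
    (h5 : ∀ T ∈ Ω, P T T = 1 - ∑ T' ∈ Ω.erase T, P T T')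
    (hx : x ∈ Ω) (f : St → ℝ) :
    Pop Ω P f x =
      (1 - ((bigs s x).card : ℝ) * (1 / ((n:ℝ)^2 * (lam+1)))
         - ((freeS s n x).card : ℝ) * (lam / ((n:ℝ)^2 * (lam+1)))) * f x +
      (1 / ((n:ℝ)^2 * (lam+1))) * ∑ a ∈ bigs s x, f (splitT s x a) +
      (lam / ((n:ℝ)^2 * (lam+1))) * ∑ a ∈ freeS s n x, f (mergeT s x a) := by
  have hsum1 : ∑ T' ∈ Ω.erase x, P x T' =
      ((bigs s x).card : ℝ) * (1 / ((n:ℝ)^2 * (lam+1)))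
        + ((freeS s n x).card : ℝ) * (lam / ((n:ℝ)^2 * (lam+1))) := by
    have := sum_erase_eq hs hΩ h2 h3 h4 hx (fun _ => (1:ℝ))
    simp only [mul_one, Finset.sum_const, nsmul_eq_mul] at this
    rw [this]; ring
  rw [Pop, ← Finset.add_sum_erase _ _ hx,
    sum_erase_eq hs hΩ h2 h3 h4 hx f, h5 x hx, hsum1]
  ring

end Chain

section Contraction

variable {s n : ℕ} {Ω : Finset St} {P : St → St → ℝ} {lam : ℝ} {x : St} {p q r : ℤ × ℤ}

lemma bigs_subset_region (hs : 2 ≤ s) (hx : IsTiling 1 s (squareRegion n) x) :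
    bigs s x ⊆ squareRegion n := fun a ha =>
  big_mem_region hx (mem_bigs.mp ha) (self_mem_sqCells (by omega))

lemma freeS_subset_region : freeS s n x ⊆ squareRegion n := Finset.filter_subset _ _

lemma card_newfree_le (hs : 2 ≤ s) (hx : IsTiling 1 s (squareRegion n) x)
    (hp : (p, s) ∈ x) :
    ((freeS s n (splitT s x p)) \ insert p (freeS s n x)).card ≤ (2 * s - 1) ^ 2 - 1 := by
  have hsub : (freeS s n (splitT s x p)) \ insert p (freeS s n x) ⊆
      (sqCells (p.1 - (s - 1 : ℕ), p.2 - (s - 1 : ℕ)) (2 * s - 1)).erase p := by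
    intro a ha
    obtain ⟨ha1, ha2⟩ := Finset.mem_sdiff.mp ha
    refine Finset.mem_erase.mpr ⟨?_, overlap_mem_box hs
      (new_free_overlaps hs hx hp ha1 ha2)⟩
    intro h
    exact ha2 (h ▸ Finset.mem_insert_self _ _)
  calc ((freeS s n (splitT s x p)) \ insert p (freeS s n x)).card
      ≤ ((sqCells (p.1 - (s - 1 : ℕ), p.2 - (s - 1 : ℕ)) (2 * s - 1)).erase p).card :=
        Finset.card_le_card hsub
    _ = (sqCells (p.1 - (s - 1 : ℕ), p.2 - (s - 1 : ℕ)) (2 * s - 1)).card - 1 :=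
        Finset.card_erase_of_mem (by rw [mem_sqCells]; simp only []; omega)
    _ ≤ (2 * s - 1) ^ 2 - 1 := by
        have := card_sqCells_le (p := (p.1 - (s - 1 : ℕ), p.2 - (s - 1 : ℕ)))
          (k := 2 * s - 1)
        omega

lemma freeS_splitT_eq (hs : 2 ≤ s) (hx : IsTiling 1 s (squareRegion n) x)
    (hp : (p, s) ∈ x) :
    freeS s n (splitT s x p) =
      insert p (freeS s n x) ∪ ((freeS s n (splitT s x p)) \ insert p (freeS s n x)) :=
  (Finset.union_sdiff_of_subset (insert_subset_freeS_splitT hs hx hp)).symm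

end Contraction

section MainContraction

variable {s n : ℕ} {Ω : Finset St} {P : St → St → ℝ} {lam : ℝ} {x : St} {p : ℤ × ℤ}

lemma contraction (hs : 2 ≤ s) (hn : s ≤ n) (hlam0 : 0 < lam)
    (hΩ : ∀ T, T ∈ Ω ↔ IsTiling 1 s (squareRegion n) T)
    (h2 : ∀ T ∈ Ω, ∀ T' ∈ Ω, centralFlipTo s T T' → P T T' = 1 / ((n:ℝ)^2 * (lam+1)))
    (h3 : ∀ T ∈ Ω, ∀ T' ∈ Ω, centralFlipTo s T' T → P T T' = lam / ((n:ℝ)^2 * (lam+1)))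
    (h4 : ∀ T ∈ Ω, ∀ T' ∈ Ω, T ≠ T' → ¬ CentralFlip s T T' → P T T' = 0)
    (h5 : ∀ T ∈ Ω, P T T = 1 - ∑ T' ∈ Ω.erase T, P T T')
    (f : St → ℝ) (L : ℝ) (hL0 : 0 ≤ L)
    (hLip : ∀ u ∈ Ω, ∀ v ∈ Ω, centralFlipTo s u v → |f u - f v| ≤ L)
    (hx : x ∈ Ω) (hp : (p, s) ∈ x) :
    |Pop Ω P f x - Pop Ω P f (splitT s x p)| ≤
      L * (1 - (1 - lam * ((2 * (s:ℝ) - 1) ^ 2 - 2)) / ((n:ℝ)^2 * (lam+1))) := by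
  have hxt : IsTiling 1 s (squareRegion n) x := (hΩ x).mp hx
  set y := splitT s x p with hy
  have hyt : IsTiling 1 s (squareRegion n) y := splitT_isTiling hs hxt hp
  have hyΩ : y ∈ Ω := (hΩ y).mpr hyt
  set E := (freeS s n y) \ insert p (freeS s n x) with hE
  set d : ℝ := 1 / ((n:ℝ)^2 * (lam+1)) with hd
  set ld : ℝ := lam / ((n:ℝ)^2 * (lam+1)) with hld
  have hn2 : (2:ℝ) ≤ (n:ℝ) := by exact_mod_cast le_trans hs hn
  have hden : (0:ℝ) < (n:ℝ)^2 * (lam+1) := by positivity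
  have hd0 : 0 ≤ d := by rw [hd]; positivity
  have hld0 : 0 ≤ ld := by rw [hld]; positivity
  -- cardinalities
  have hpbigs : p ∈ bigs s x := mem_bigs.mpr hp
  have hpfree : p ∉ freeS s n x := not_mem_freeS_self hs hxt hp
  set b := (bigs s x).card with hb
  set m := (freeS s n x).card with hm
  set e := E.card with he
  have hb1 : 1 ≤ b := Finset.card_pos.mpr ⟨p, hpbigs⟩
  have hbigsy : bigs s y = (bigs s x).erase p := bigs_splitT hs
  have hcardby : ((bigs s y).card : ℝ) = (b : ℝ) - 1 := by
    rw [hbigsy, Finset.card_erase_of_mem hpbigs]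
    push_cast [Nat.cast_sub (show 1 ≤ (bigs s x).card from hb1)]
    ring
  have hfreey : freeS s n y = insert p (freeS s n x) ∪ E := freeS_splitT_eq hs hxt hp
  have hdisjE : Disjoint (insert p (freeS s n x)) E := Finset.disjoint_sdiff
  have hcardmy : ((freeS s n y).card : ℝ) = (m : ℝ) + 1 + (e : ℝ) := by
    rw [hfreey, Finset.card_union_of_disjoint hdisjE, Finset.card_insert_of_notMem hpfree]
    push_cast
    ring
  -- bounds on cardinalities
  have hbN : (b : ℝ) ≤ (n:ℝ)^2 := by
    have h1 : b ≤ n ^ 2 :=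
      le_trans (Finset.card_le_card (bigs_subset_region hs hxt)) card_squareRegion_le
    exact_mod_cast h1
  have hmN : (m : ℝ) + 1 ≤ (n:ℝ)^2 := by
    have h1 : m + 1 ≤ n ^ 2 := by
      have := Finset.card_le_card
        (le_trans (Finset.subset_union_left) (hfreey ▸ freeS_subset_region (x := y)))
      rw [Finset.card_insert_of_notMem hpfree] at this
      exact le_trans this card_squareRegion_le
    exact_mod_cast h1
  have heK : (e : ℝ) ≤ (2 * (s:ℝ) - 1) ^ 2 - 1 := by
    have h1 : e ≤ (2 * s - 1) ^ 2 - 1 := card_newfree_le hs hxt hp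
    have h2' : ((2 * s - 1 : ℕ) : ℝ) = 2 * (s:ℝ) - 1 := by
      push_cast [Nat.cast_sub (show 1 ≤ 2 * s by omega)]; ring
    have h3' : (1:ℕ) ≤ (2 * s - 1) ^ 2 := by nlinarith [show 1 ≤ 2 * s - 1 by omega]
    calc (e : ℝ) ≤ (((2 * s - 1) ^ 2 - 1 : ℕ) : ℝ) := by exact_mod_cast h1
      _ = 2 * ((2 * (s:ℝ) - 1) ^ 2 / 2) - 1 := by
          push_cast [Nat.cast_sub h3']
          rw [h2']; ring
      _ = (2 * (s:ℝ) - 1) ^ 2 - 1 := by ring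
  -- expansions
  have hx1 := Pop_eq hs hΩ h2 h3 h4 h5 hx f
  have hy1 := Pop_eq hs hΩ h2 h3 h4 h5 hyΩ f
  rw [← hd, ← hld] at hx1 hy1
  rw [← hb, ← hm] at hx1
  -- rewrite the sums in hy1
  rw [hcardby, hcardmy, hbigsy, hfreey,
    Finset.sum_union hdisjE, Finset.sum_insert hpfree] at hy1
  -- identify special values
  have hxp : splitT s x p = y := rfl
  have hyp : mergeT s y p = x := mergeT_splitT hs hxt hp
  rw [← Finset.add_sum_erase _ (fun a => f (splitT s x a)) hpbigs, ← hy] at hx1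
  rw [hyp] at hy1
  set S1 := ∑ a ∈ (bigs s x).erase p, f (splitT s x a) with hS1
  set S2 := ∑ a ∈ (bigs s x).erase p, f (splitT s y a) with hS2
  set S3 := ∑ a ∈ freeS s n x, f (mergeT s x a) with hS3
  set S4 := ∑ a ∈ freeS s n x, f (mergeT s y a) with hS4
  set S5 := ∑ a ∈ E, f (mergeT s y a) with hS5
  set A : ℝ := 1 - (b:ℝ) * d - ((m:ℝ) + 1) * ld with hA
  have key : Pop Ω P f x - Pop Ω P f y =
      A * (f x - f y) + d * (S1 - S2) + ld * (S3 - S4) + ld * ((e:ℝ) * f y - S5) := by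
    rw [hx1, hy1, hA]
    ring
  have hfxy : |f x - f y| ≤ L := hLip x hx y hyΩ (flipTo_splitT hp)
  have hA0 : 0 ≤ A := by
    have hb' : (b:ℝ) * d ≤ (n:ℝ)^2 * d := mul_le_mul_of_nonneg_right hbN hd0
    have hm' : ((m:ℝ) + 1) * ld ≤ (n:ℝ)^2 * ld := mul_le_mul_of_nonneg_right hmN hld0
    have hone : (n:ℝ)^2 * d + (n:ℝ)^2 * ld = 1 := by
      rw [hd, hld]
      field_simp
      ring
    rw [hA]
    linarith
  have hS12 : |S1 - S2| ≤ ((b:ℝ) - 1) * L := by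
    rw [hS1, hS2, ← Finset.sum_sub_distrib]
    refine le_trans (Finset.abs_sum_le_sum_abs _ _) ?_
    have hcard : (((bigs s x).erase p).card : ℝ) = (b:ℝ) - 1 := by
      rw [Finset.card_erase_of_mem hpbigs]
      push_cast [Nat.cast_sub (show 1 ≤ (bigs s x).card from hb1)]
      ring
    calc ∑ a ∈ (bigs s x).erase p, |f (splitT s x a) - f (splitT s y a)|
        ≤ ((bigs s x).erase p).card • L := by
          refine Finset.sum_le_card_nsmul _ _ L (fun a ha => ?_)
          obtain ⟨hap, habig⟩ := Finset.mem_erase.mp ha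
          have ha2 : (a, s) ∈ x := mem_bigs.mp habig
          have huΩ : splitT s x a ∈ Ω := (hΩ _).mpr (splitT_isTiling hs hxt ha2)
          have hay : (a, s) ∈ y :=
            mem_splitT.mpr (Or.inl ⟨ha2, fun h => hap (congrArg Prod.fst h)⟩)
          have hvΩ : splitT s y a ∈ Ω := (hΩ _).mpr (splitT_isTiling hs hyt hay)
          have hpu : (p, s) ∈ splitT s x a :=
            mem_splitT.mpr (Or.inl ⟨hp, fun h => hap (congrArg Prod.fst h).symm⟩)
          have hflip : centralFlipTo s (splitT s x a) (splitT s y a) :=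
            ⟨p, hpu, by rw [hy, splitT_comm hs]; rfl⟩
          exact hLip _ huΩ _ hvΩ hflip
      _ = ((b:ℝ) - 1) * L := by rw [nsmul_eq_mul, hcard]
  have hS34 : |S3 - S4| ≤ (m:ℝ) * L := by
    rw [hS3, hS4, ← Finset.sum_sub_distrib]
    refine le_trans (Finset.abs_sum_le_sum_abs _ _) ?_
    calc ∑ a ∈ freeS s n x, |f (mergeT s x a) - f (mergeT s y a)|
        ≤ (freeS s n x).card • L := by
          refine Finset.sum_le_card_nsmul _ _ L (fun a ha => ?_)
          have huΩ : mergeT s x a ∈ Ω := (hΩ _).mpr (mergeT_isTiling hs hxt ha)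
          have hay : a ∈ freeS s n y :=
            insert_subset_freeS_splitT hs hxt hp (Finset.mem_insert_of_mem ha)
          have hvΩ : mergeT s y a ∈ Ω := (hΩ _).mpr (mergeT_isTiling hs hyt hay)
          have hpu : (p, s) ∈ mergeT s x a :=
            mem_mergeT.mpr (Or.inl ⟨hp, not_mem_unitsImg_big hs⟩)
          have hflip : centralFlipTo s (mergeT s x a) (mergeT s y a) :=
            ⟨p, hpu, by rw [hy, merge_split_comm hs hxt hp ha]; rfl⟩
          exact hLip _ huΩ _ hvΩ hflip
      _ = (m:ℝ) * L := by rw [nsmul_eq_mul, hm]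
  have hS5b : |(e:ℝ) * f y - S5| ≤ (e:ℝ) * L := by
    have hconst : (e:ℝ) * f y = ∑ _a ∈ E, f y := by
      rw [Finset.sum_const, nsmul_eq_mul, he]
    rw [hS5, hconst, ← Finset.sum_sub_distrib]
    refine le_trans (Finset.abs_sum_le_sum_abs _ _) ?_
    calc ∑ a ∈ E, |f y - f (mergeT s y a)|
        ≤ E.card • L := by
          refine Finset.sum_le_card_nsmul _ _ L (fun a ha => ?_)
          have hay : a ∈ freeS s n y := (Finset.mem_sdiff.mp ha).1
          have huΩ : mergeT s y a ∈ Ω := (hΩ _).mpr (mergeT_isTiling hs hyt hay)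
          rw [abs_sub_comm]
          exact hLip _ huΩ _ hyΩ (flipTo_mergeT hs hyt hay)
      _ = (e:ℝ) * L := by rw [nsmul_eq_mul, he]
  have habs : |Pop Ω P f x - Pop Ω P f y| ≤
      A * L + d * (((b:ℝ) - 1) * L) + ld * ((m:ℝ) * L) + ld * ((e:ℝ) * L) := by
    rw [key]
    have t1 : |A * (f x - f y)| ≤ A * L := by
      rw [abs_mul, abs_of_nonneg hA0]
      exact mul_le_mul_of_nonneg_left hfxy hA0
    have t2 : |d * (S1 - S2)| ≤ d * (((b:ℝ) - 1) * L) := by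
      rw [abs_mul, abs_of_nonneg hd0]
      exact mul_le_mul_of_nonneg_left hS12 hd0
    have t3 : |ld * (S3 - S4)| ≤ ld * ((m:ℝ) * L) := by
      rw [abs_mul, abs_of_nonneg hld0]
      exact mul_le_mul_of_nonneg_left hS34 hld0
    have t4 : |ld * ((e:ℝ) * f y - S5)| ≤ ld * ((e:ℝ) * L) := by
      rw [abs_mul, abs_of_nonneg hld0]
      exact mul_le_mul_of_nonneg_left hS5b hld0
    calc |A * (f x - f y) + d * (S1 - S2) + ld * (S3 - S4) + ld * ((e:ℝ) * f y - S5)|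
        ≤ |A * (f x - f y) + d * (S1 - S2) + ld * (S3 - S4)| + |ld * ((e:ℝ) * f y - S5)| :=
          abs_add_le _ _
      _ ≤ |A * (f x - f y) + d * (S1 - S2)| + |ld * (S3 - S4)| + |ld * ((e:ℝ) * f y - S5)| := by
          have := abs_add_le (A * (f x - f y) + d * (S1 - S2)) (ld * (S3 - S4))
          linarith
      _ ≤ |A * (f x - f y)| + |d * (S1 - S2)| + |ld * (S3 - S4)| + |ld * ((e:ℝ) * f y - S5)| := by
          have := abs_add_le (A * (f x - f y)) (d * (S1 - S2))
          linarith
      _ ≤ A * L + d * (((b:ℝ) - 1) * L) + ld * ((m:ℝ) * L) + ld * ((e:ℝ) * L) := by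
          linarith
  refine le_trans habs ?_
  have heL : ld * ((e:ℝ) * L) ≤ ld * (((2 * (s:ℝ) - 1) ^ 2 - 1) * L) := by
    refine mul_le_mul_of_nonneg_left ?_ hld0
    exact mul_le_mul_of_nonneg_right heK hL0
  have hfinal : A * L + d * (((b:ℝ) - 1) * L) + ld * ((m:ℝ) * L)
      + ld * (((2 * (s:ℝ) - 1) ^ 2 - 1) * L)
      = L * (1 - (1 - lam * ((2 * (s:ℝ) - 1) ^ 2 - 2)) / ((n:ℝ)^2 * (lam+1))) := by
    rw [hA, hd, hld]
    field_simp
    ring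
  linarith

end MainContraction

section Stationary

variable {s n : ℕ} {Ω : Finset St} {P : St → St → ℝ} {lam : ℝ} {x : St} {p : ℤ × ℤ}

def allUnits (n : ℕ) : St := (squareRegion n).image (fun q => (q, 1))

lemma allUnits_isTiling (hs : 2 ≤ s) : IsTiling 1 s (squareRegion n) (allUnits n) := by
  refine ⟨?_, ?_, ?_⟩
  · intro t ht
    obtain ⟨a, ha, rfl⟩ := Finset.mem_image.mp ht
    exact Or.inl rfl
  · intro t ht t' ht' hne
    obtain ⟨a, ha, rfl⟩ := Finset.mem_image.mp ht
    obtain ⟨a', ha', rfl⟩ := Finset.mem_image.mp ht'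
    simp only [sqCells_one]
    rw [Finset.disjoint_singleton]
    intro h
    exact hne (by rw [h])
  · ext a
    simp only [mem_biUnion]
    constructor
    · rintro ⟨t, ht, hat⟩
      obtain ⟨c, hc, rfl⟩ := Finset.mem_image.mp ht
      have hat' : a ∈ sqCells c 1 := hat
      rw [sqCells_one, mem_singleton] at hat'
      subst hat'
      exact hc
    · intro ha
      exact ⟨(a, 1), Finset.mem_image.mpr ⟨a, ha, rfl⟩, by simp [sqCells_one]⟩

lemma allUnits_unique (hs : 2 ≤ s) (hx : IsTiling 1 s (squareRegion n) x)
    (h0 : bigCount s x = 0) : x = allUnits n := by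
  have hfil : ∀ t ∈ x, t.2 = 1 := by
    intro t ht
    rcases hx.1 t ht with h | h
    · exact h
    · exfalso
      rw [bigCount, Finset.card_eq_zero] at h0
      exact absurd (Finset.mem_filter.mpr ⟨ht, h⟩) (by rw [h0]; exact Finset.notMem_empty t)
  ext t
  constructor
  · intro ht
    have h1 := hfil t ht
    have hmem : t.1 ∈ squareRegion n := by
      rw [← hx.2.2]
      exact Finset.mem_biUnion.mpr ⟨t, ht, self_mem_sqCells (by omega)⟩
    exact Finset.mem_image.mpr ⟨t.1, hmem, by rw [← h1]⟩
  · intro ht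
    obtain ⟨a, ha, rfl⟩ := Finset.mem_image.mp ht
    rw [← hx.2.2] at ha
    obtain ⟨u, hu, hau⟩ := Finset.mem_biUnion.mp ha
    have h1 := hfil u hu
    rw [h1, sqCells_one, mem_singleton] at hau
    have : u = (a, 1) := Prod.ext hau.symm h1
    exact this ▸ hu

lemma bigCount_le_region (hx : IsTiling 1 s (squareRegion n) x) (hs : 2 ≤ s) :
    bigCount s x ≤ n ^ 2 :=
  le_trans (bigCount_eq_card_bigs ▸ Finset.card_le_card (bigs_subset_region hs hx))
    card_squareRegion_le

lemma row_sum_one (h5 : ∀ T ∈ Ω, P T T = 1 - ∑ T' ∈ Ω.erase T, P T T')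
    (hx : x ∈ Ω) : ∑ z ∈ Ω, P x z = 1 := by
  rw [← Finset.add_sum_erase _ _ hx, h5 x hx]
  ring

lemma detailed_balance (hs : 2 ≤ s)
    (hΩ : ∀ T, T ∈ Ω ↔ IsTiling 1 s (squareRegion n) T)
    (h2 : ∀ T ∈ Ω, ∀ T' ∈ Ω, centralFlipTo s T T' → P T T' = 1 / ((n:ℝ)^2 * (lam+1)))
    (h3 : ∀ T ∈ Ω, ∀ T' ∈ Ω, centralFlipTo s T' T → P T T' = lam / ((n:ℝ)^2 * (lam+1)))
    (h4 : ∀ T ∈ Ω, ∀ T' ∈ Ω, T ≠ T' → ¬ CentralFlip s T T' → P T T' = 0)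
    {u v : St} (hu : u ∈ Ω) (hv : v ∈ Ω) :
    lam ^ bigCount s u * P u v = lam ^ bigCount s v * P v u := by
  classical
  by_cases huv : u = v
  · rw [huv]
  have key : ∀ w w' : St, w ∈ Ω → w' ∈ Ω → centralFlipTo s w w' →
      lam ^ bigCount s w * P w w' = lam ^ bigCount s w' * P w' w := by
    intro w w' hw hw' hf
    obtain ⟨a, haw, hww'⟩ := hf
    have hw'eq : w' = splitT s w a := hww'
    have hbc : bigCount s w' = bigCount s w - 1 := by
      rw [hw'eq]; exact bigCount_splitT hs haw
    have hb1 : 1 ≤ bigCount s w := by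
      rw [bigCount_eq_card_bigs]
      exact Finset.card_pos.mpr ⟨a, mem_bigs.mpr haw⟩
    have hPw : P w w' = 1 / ((n:ℝ)^2 * (lam+1)) := h2 w hw w' hw' ⟨a, haw, hww'⟩
    have hPw' : P w' w = lam / ((n:ℝ)^2 * (lam+1)) := h3 w' hw' w hw ⟨a, haw, hww'⟩
    obtain ⟨k, hk⟩ : ∃ k, bigCount s w = k + 1 := ⟨bigCount s w - 1, by omega⟩
    rw [hPw, hPw', hbc, hk, Nat.add_sub_cancel, pow_succ]
    ring
  by_cases hf1 : centralFlipTo s u v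
  · exact key u v hu hv hf1
  by_cases hf2 : centralFlipTo s v u
  · exact (key v u hv hu hf2).symm
  · rw [h4 u hu v hv huv (fun h => h.elim hf1 hf2),
      h4 v hv u hu (Ne.symm huv) (fun h => h.elim hf2 hf1)]
    ring

lemma stationary (hs : 2 ≤ s)
    (hΩ : ∀ T, T ∈ Ω ↔ IsTiling 1 s (squareRegion n) T)
    (h2 : ∀ T ∈ Ω, ∀ T' ∈ Ω, centralFlipTo s T T' → P T T' = 1 / ((n:ℝ)^2 * (lam+1)))
    (h3 : ∀ T ∈ Ω, ∀ T' ∈ Ω, centralFlipTo s T' T → P T T' = lam / ((n:ℝ)^2 * (lam+1)))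
    (h4 : ∀ T ∈ Ω, ∀ T' ∈ Ω, T ≠ T' → ¬ CentralFlip s T T' → P T T' = 0)
    (h5 : ∀ T ∈ Ω, P T T = 1 - ∑ T' ∈ Ω.erase T, P T T')
    {v : St} (hv : v ∈ Ω) :
    ∑ u ∈ Ω, lam ^ bigCount s u * P u v = lam ^ bigCount s v := by
  have : ∀ u ∈ Ω, lam ^ bigCount s u * P u v = lam ^ bigCount s v * P v u := fun u hu =>
    detailed_balance hs hΩ h2 h3 h4 hu hv
  rw [Finset.sum_congr rfl this, ← Finset.mul_sum, row_sum_one h5 hv, mul_one]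

/-- invariance of the weight under the operator. -/
lemma Pop_invariant (hs : 2 ≤ s)
    (hΩ : ∀ T, T ∈ Ω ↔ IsTiling 1 s (squareRegion n) T)
    (h2 : ∀ T ∈ Ω, ∀ T' ∈ Ω, centralFlipTo s T T' → P T T' = 1 / ((n:ℝ)^2 * (lam+1)))
    (h3 : ∀ T ∈ Ω, ∀ T' ∈ Ω, centralFlipTo s T' T → P T T' = lam / ((n:ℝ)^2 * (lam+1)))
    (h4 : ∀ T ∈ Ω, ∀ T' ∈ Ω, T ≠ T' → ¬ CentralFlip s T T' → P T T' = 0)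
    (h5 : ∀ T ∈ Ω, P T T = 1 - ∑ T' ∈ Ω.erase T, P T T')
    (f : St → ℝ) :
    ∑ u ∈ Ω, lam ^ bigCount s u * Pop Ω P f u = ∑ u ∈ Ω, lam ^ bigCount s u * f u := by
  have step : ∀ u : St, lam ^ bigCount s u * Pop Ω P f u =
      ∑ z ∈ Ω, (lam ^ bigCount s u * P u z) * f z := by
    intro u
    rw [Pop, Finset.mul_sum]
    exact Finset.sum_congr rfl (fun z hz => by ring)
  rw [Finset.sum_congr rfl (fun u _ => step u), Finset.sum_comm]
  refine Finset.sum_congr rfl (fun z hz => ?_)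
  rw [← Finset.sum_mul, stationary hs hΩ h2 h3 h4 h5 hz]

end Stationary

section Iterate

variable {s n : ℕ} {Ω : Finset St} {P : St → St → ℝ} {lam : ℝ} {x : St}

lemma matPow_apply (hx : x ∈ Ω) (f : St → ℝ) :
    ∀ t : ℕ, ∑ y ∈ Ω, matPow Ω P t x y * f y = (Pop Ω P)^[t] f x := by
  intro t
  induction t generalizing f with
  | zero =>
    simp only [matPow, Function.iterate_zero, id_eq, ite_mul, one_mul, zero_mul]
    rw [Finset.sum_ite_eq Ω x f]
    simp [hx]
  | succ t ih =>
    have : ∀ y : St, matPow Ω P (t+1) x y * f y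
        = ∑ z ∈ Ω, matPow Ω P t x z * (P z y * f y) := by
      intro y
      show (∑ z ∈ Ω, matPow Ω P t x z * P z y) * f y = _
      rw [Finset.sum_mul]
      exact Finset.sum_congr rfl (fun z hz => by ring)
    rw [Finset.sum_congr rfl (fun y _ => this y), Finset.sum_comm]
    have : ∀ z : St, (∑ y ∈ Ω, matPow Ω P t x z * (P z y * f y))
        = matPow Ω P t x z * Pop Ω P f z := by
      intro z
      rw [Pop, Finset.mul_sum]
    rw [Finset.sum_congr rfl (fun z _ => this z), ih (Pop Ω P f),
      Function.iterate_succ_apply]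

lemma iter_lip (hs : 2 ≤ s) (hn : s ≤ n) (hlam0 : 0 < lam)
    (hΩ : ∀ T, T ∈ Ω ↔ IsTiling 1 s (squareRegion n) T)
    (h2 : ∀ T ∈ Ω, ∀ T' ∈ Ω, centralFlipTo s T T' → P T T' = 1 / ((n:ℝ)^2 * (lam+1)))
    (h3 : ∀ T ∈ Ω, ∀ T' ∈ Ω, centralFlipTo s T' T → P T T' = lam / ((n:ℝ)^2 * (lam+1)))
    (h4 : ∀ T ∈ Ω, ∀ T' ∈ Ω, T ≠ T' → ¬ CentralFlip s T T' → P T T' = 0)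
    (h5 : ∀ T ∈ Ω, P T T = 1 - ∑ T' ∈ Ω.erase T, P T T')
    (f : St → ℝ) (L : ℝ) (hL0 : 0 ≤ L)
    (hρ0 : 0 ≤ 1 - (1 - lam * ((2 * (s:ℝ) - 1) ^ 2 - 2)) / ((n:ℝ)^2 * (lam+1)))
    (hLip : ∀ u ∈ Ω, ∀ v ∈ Ω, centralFlipTo s u v → |f u - f v| ≤ L) :
    ∀ t : ℕ, ∀ u ∈ Ω, ∀ v ∈ Ω, centralFlipTo s u v →
      |(Pop Ω P)^[t] f u - (Pop Ω P)^[t] f v| ≤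
        L * (1 - (1 - lam * ((2 * (s:ℝ) - 1) ^ 2 - 2)) / ((n:ℝ)^2 * (lam+1))) ^ t := by
  intro t
  set ρ : ℝ := 1 - (1 - lam * ((2 * (s:ℝ) - 1) ^ 2 - 2)) / ((n:ℝ)^2 * (lam+1)) with hρ
  induction t with
  | zero =>
    intro u hu v hv hf
    simpa using hLip u hu v hv hf
  | succ t ih =>
    intro u hu v hv hf
    obtain ⟨p, hp, hv'⟩ := hf
    have hveq : v = splitT s u p := hv'
    rw [Function.iterate_succ_apply', hveq]
    have := contraction hs hn hlam0 hΩ h2 h3 h4 h5 ((Pop Ω P)^[t] f)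
      (L * ρ ^ t) (by positivity) ih hu hp
    calc |Pop Ω P ((Pop Ω P)^[t] f) u - Pop Ω P ((Pop Ω P)^[t] f) (splitT s u p)|
        ≤ L * ρ ^ t * ρ := this
      _ = L * ρ ^ (t + 1) := by rw [pow_succ]; ring

lemma dist_allUnits (hs : 2 ≤ s)
    (hΩ : ∀ T, T ∈ Ω ↔ IsTiling 1 s (squareRegion n) T)
    (g : St → ℝ) (L : ℝ) (hL0 : 0 ≤ L)
    (hLip : ∀ u ∈ Ω, ∀ v ∈ Ω, centralFlipTo s u v → |g u - g v| ≤ L) :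
    ∀ k : ℕ, ∀ x ∈ Ω, bigCount s x = k → |g x - g (allUnits n)| ≤ L * k := by
  intro k
  induction k with
  | zero =>
    intro x hx h0
    rw [allUnits_unique hs ((hΩ x).mp hx) h0]
    simp only [sub_self, abs_zero, Nat.cast_zero, mul_zero, le_refl]
  | succ k ih =>
    intro x hx h0
    have hne : (bigs s x).Nonempty := by
      rw [← Finset.card_pos, ← bigCount_eq_card_bigs, h0]
      omega
    obtain ⟨p, hp⟩ := hne
    have hp' : (p, s) ∈ x := mem_bigs.mp hp
    have hxt : IsTiling 1 s (squareRegion n) x := (hΩ x).mp hx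
    have hyΩ : splitT s x p ∈ Ω := (hΩ _).mpr (splitT_isTiling hs hxt hp')
    have hbc : bigCount s (splitT s x p) = k := by
      rw [bigCount_splitT hs hp', h0]
      omega
    have h1 : |g x - g (splitT s x p)| ≤ L := hLip x hx _ hyΩ (flipTo_splitT hp')
    have h2 := ih (splitT s x p) hyΩ hbc
    calc |g x - g (allUnits n)|
        ≤ |g x - g (splitT s x p)| + |g (splitT s x p) - g (allUnits n)| := abs_sub_le _ _ _
      _ ≤ L + L * k := by linarith
      _ = L * (k + 1 : ℕ) := by push_cast; ring

lemma Pop_iter_invariant (hs : 2 ≤ s)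
    (hΩ : ∀ T, T ∈ Ω ↔ IsTiling 1 s (squareRegion n) T)
    (h2 : ∀ T ∈ Ω, ∀ T' ∈ Ω, centralFlipTo s T T' → P T T' = 1 / ((n:ℝ)^2 * (lam+1)))
    (h3 : ∀ T ∈ Ω, ∀ T' ∈ Ω, centralFlipTo s T' T → P T T' = lam / ((n:ℝ)^2 * (lam+1)))
    (h4 : ∀ T ∈ Ω, ∀ T' ∈ Ω, T ≠ T' → ¬ CentralFlip s T T' → P T T' = 0)
    (h5 : ∀ T ∈ Ω, P T T = 1 - ∑ T' ∈ Ω.erase T, P T T')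
    (t : ℕ) (f : St → ℝ) :
    ∑ u ∈ Ω, lam ^ bigCount s u * (Pop Ω P)^[t] f u = ∑ u ∈ Ω, lam ^ bigCount s u * f u := by
  induction t generalizing f with
  | zero => simp
  | succ t ih =>
    have : (Pop Ω P)^[t+1] f = (Pop Ω P)^[t] (Pop Ω P f) := Function.iterate_succ_apply _ _ _
    rw [this, ih (Pop Ω P f), Pop_invariant hs hΩ h2 h3 h4 h5 f]

end Iterate

section TV

variable {s n : ℕ} {Ω : Finset St} {P : St → St → ℝ} {lam : ℝ} {x : St}

lemma tv_bound (hs : 2 ≤ s) (hn : s ≤ n) (hlam0 : 0 < lam)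
    (hΩ : ∀ T, T ∈ Ω ↔ IsTiling 1 s (squareRegion n) T)
    (h2 : ∀ T ∈ Ω, ∀ T' ∈ Ω, centralFlipTo s T T' → P T T' = 1 / ((n:ℝ)^2 * (lam+1)))
    (h3 : ∀ T ∈ Ω, ∀ T' ∈ Ω, centralFlipTo s T' T → P T T' = lam / ((n:ℝ)^2 * (lam+1)))
    (h4 : ∀ T ∈ Ω, ∀ T' ∈ Ω, T ≠ T' → ¬ CentralFlip s T T' → P T T' = 0)
    (h5 : ∀ T ∈ Ω, P T T = 1 - ∑ T' ∈ Ω.erase T, P T T')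
    (hρ0 : 0 ≤ 1 - (1 - lam * ((2 * (s:ℝ) - 1) ^ 2 - 2)) / ((n:ℝ)^2 * (lam+1)))
    (hx : x ∈ Ω) (t : ℕ) :
    dTV Ω (fun y => matPow Ω P t x y)
        (fun T => lam ^ bigCount s T / ∑ T' ∈ Ω, lam ^ bigCount s T') ≤
      2 * (n:ℝ)^2 * (1 - (1 - lam * ((2 * (s:ℝ) - 1) ^ 2 - 2)) / ((n:ℝ)^2 * (lam+1))) ^ t := by
  classical
  set ρ : ℝ := 1 - (1 - lam * ((2 * (s:ℝ) - 1) ^ 2 - 2)) / ((n:ℝ)^2 * (lam+1)) with hρ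
  set w : St → ℝ := fun z => lam ^ bigCount s z with hw
  set Z : ℝ := ∑ T' ∈ Ω, lam ^ bigCount s T' with hZ
  have hUΩ : allUnits n ∈ Ω := (hΩ _).mpr (allUnits_isTiling hs)
  have hZ0 : 0 < Z := Finset.sum_pos (fun z hz => pow_pos hlam0 _) ⟨allUnits n, hUΩ⟩
  set μ : St → ℝ := fun y => matPow Ω P t x y with hμ
  set f : St → ℝ := fun z => if w z / Z ≤ μ z then (1:ℝ) else -1 with hf
  have hfLip : ∀ u ∈ Ω, ∀ v ∈ Ω, centralFlipTo s u v → |f u - f v| ≤ 2 := by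
    intro u hu v hv hflip
    rw [hf]
    dsimp only
    split_ifs <;> norm_num
  set g : St → ℝ := (Pop Ω P)^[t] f with hg
  have hglip : ∀ u ∈ Ω, ∀ v ∈ Ω, centralFlipTo s u v → |g u - g v| ≤ 2 * ρ ^ t :=
    iter_lip hs hn hlam0 hΩ h2 h3 h4 h5 f 2 (by norm_num) hρ0 hfLip t
  have hgdist : ∀ y ∈ Ω, |g y - g (allUnits n)| ≤ 2 * ρ ^ t * (n:ℝ)^2 := by
    intro y hy
    have h1 := dist_allUnits hs hΩ g (2 * ρ ^ t) (by positivity) hglip (bigCount s y) y hy rfl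
    have h2' : (bigCount s y : ℝ) ≤ (n:ℝ)^2 := by
      exact_mod_cast bigCount_le_region ((hΩ y).mp hy) hs
    calc |g y - g (allUnits n)| ≤ 2 * ρ ^ t * (bigCount s y : ℝ) := h1
      _ ≤ 2 * ρ ^ t * (n:ℝ)^2 := by
          refine mul_le_mul_of_nonneg_left h2' (by positivity)
  have hdistpair : ∀ y ∈ Ω, |g x - g y| ≤ 4 * ρ ^ t * (n:ℝ)^2 := by
    intro y hy
    calc |g x - g y| ≤ |g x - g (allUnits n)| + |g (allUnits n) - g y| := abs_sub_le _ _ _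
      _ ≤ 2 * ρ ^ t * (n:ℝ)^2 + 2 * ρ ^ t * (n:ℝ)^2 := by
          have := hgdist x hx
          have h2' := hgdist y hy
          rw [abs_sub_comm (g (allUnits n)) (g y)] at *
          linarith
      _ = 4 * ρ ^ t * (n:ℝ)^2 := by ring
  -- pointwise absolute values
  have hpt : ∀ y : St, |μ y - w y / Z| = f y * (μ y - w y / Z) := by
    intro y
    rw [hf]
    dsimp only
    by_cases h : w y / Z ≤ μ y
    · rw [if_pos h, one_mul, abs_of_nonneg (by linarith)]
    · rw [if_neg h, abs_of_neg (by push_neg at h; linarith)]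
      ring
  have hπsum : ∑ y ∈ Ω, w y / Z = 1 := by
    rw [← Finset.sum_div, ← hZ, div_self (ne_of_gt hZ0)]
  have hsum1 : ∑ y ∈ Ω, μ y * f y = g x := matPow_apply hx f t
  have hinv : ∑ y ∈ Ω, w y * g y = ∑ y ∈ Ω, w y * f y :=
    Pop_iter_invariant hs hΩ h2 h3 h4 h5 t f
  have hsum2 : ∑ y ∈ Ω, (w y / Z) * f y = (∑ y ∈ Ω, w y * g y) / Z := by
    rw [hinv, Finset.sum_div]
    exact Finset.sum_congr rfl (fun y hy => by rw [div_mul_eq_mul_div])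
  have habs : ∑ y ∈ Ω, |μ y - w y / Z| = g x - (∑ y ∈ Ω, w y * g y) / Z := by
    rw [Finset.sum_congr rfl (fun y _ => hpt y)]
    have hexp : ∀ y : St, f y * (μ y - w y / Z) = μ y * f y - (w y / Z) * f y := fun y => by ring
    rw [Finset.sum_congr rfl (fun y _ => hexp y), Finset.sum_sub_distrib, hsum1, hsum2]
  have hswg : (∑ y ∈ Ω, w y * g y) / Z = ∑ y ∈ Ω, (w y / Z) * g y := by
    rw [Finset.sum_div]
    exact Finset.sum_congr rfl (fun y hy => by rw [div_mul_eq_mul_div])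
  have hkey : g x - (∑ y ∈ Ω, w y * g y) / Z = ∑ y ∈ Ω, (w y / Z) * (g x - g y) := by
    rw [hswg]
    have hexp : ∀ y : St, (w y / Z) * (g x - g y) = (w y / Z) * g x - (w y / Z) * g y :=
      fun y => by ring
    rw [Finset.sum_congr rfl (fun y _ => hexp y), Finset.sum_sub_distrib, ← Finset.sum_mul,
      hπsum, one_mul]
  have hbound : ∑ y ∈ Ω, (w y / Z) * (g x - g y) ≤ 4 * ρ ^ t * (n:ℝ)^2 := by
    calc ∑ y ∈ Ω, (w y / Z) * (g x - g y)
        ≤ ∑ y ∈ Ω, (w y / Z) * (4 * ρ ^ t * (n:ℝ)^2) := by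
          refine Finset.sum_le_sum (fun y hy => ?_)
          refine mul_le_mul_of_nonneg_left ?_ ?_
          · exact le_trans (le_abs_self _) (hdistpair y hy)
          · have : 0 < w y := pow_pos hlam0 _
            positivity
      _ = 4 * ρ ^ t * (n:ℝ)^2 := by rw [← Finset.sum_mul, hπsum, one_mul]
  have htot : ∑ y ∈ Ω, |μ y - w y / Z| ≤ 4 * ρ ^ t * (n:ℝ)^2 := by
    rw [habs, hkey]; exact hbound
  show (1/2 : ℝ) * ∑ y ∈ Ω, |μ y - w y / Z| ≤ 2 * (n:ℝ)^2 * ρ ^ t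
  calc (1/2 : ℝ) * ∑ y ∈ Ω, |μ y - w y / Z| ≤ (1/2) * (4 * ρ ^ t * (n:ℝ)^2) := by linarith
    _ = 2 * (n:ℝ)^2 * ρ ^ t := by ring

end TV


set_option maxHeartbeats 2000000 in
/-- The weighted central-flip chain MC_{(1,s)-square} on (1,s)-tilings of the n×n square,
with weight `λ` on the s×s tiles, is rapidly mixing for `0 < λ < 1/((2s−1)² − 2)`:
there is a constant `c > 0` (depending only on `s` and `λ`) such that for all `n ≥ s`
and all `ε ∈ (0,1)`, `τ_mix(ε) ≤ c n⁴ ln(n/ε)`, where the stationary distribution is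
`π(T) = λ^{b(T)}/Z` with `b(T)` the number of s×s tiles of `T`. -/
theorem rapid_mixing_weighted_one_s_square (s : ℕ) (hs : 2 ≤ s) (lam : ℝ) (hlam0 : 0 < lam)
    (hlam : lam < 1 / ((2 * (s : ℝ) - 1) ^ 2 - 2)) :
    ∃ c : ℝ, 0 < c ∧
      ∀ n : ℕ, s ≤ n →
        ∀ (Ω : Finset (Finset ((ℤ × ℤ) × ℕ)))
          (P : Finset ((ℤ × ℤ) × ℕ) → Finset ((ℤ × ℤ) × ℕ) → ℝ),
          (∀ T, T ∈ Ω ↔ IsTiling 1 s (squareRegion n) T) →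
          -- replacing one s×s tile by s² unit tiles
          (∀ T ∈ Ω, ∀ T' ∈ Ω, centralFlipTo s T T' →
              P T T' = 1 / ((n : ℝ) ^ 2 * (lam + 1))) →
          -- replacing s² unit tiles filling an s×s square by one s×s tile
          (∀ T ∈ Ω, ∀ T' ∈ Ω, centralFlipTo s T' T →
              P T T' = lam / ((n : ℝ) ^ 2 * (lam + 1))) →
          -- all other off-diagonal entries vanish
          (∀ T ∈ Ω, ∀ T' ∈ Ω, T ≠ T' → ¬ CentralFlip s T T' → P T T' = 0) →
          -- diagonal entries
          (∀ T ∈ Ω, P T T = 1 - ∑ T' ∈ Ω.erase T, P T T') →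
          ∀ ε : ℝ, 0 < ε → ε < 1 →
            (mixingTime Ω P
                (fun T => lam ^ bigCount s T / ∑ T' ∈ Ω, lam ^ bigCount s T') ε : ℝ) ≤
              c * (n : ℝ) ^ 4 * Real.log ((n : ℝ) / ε) := by
  classical
  set C2 : ℝ := (2 * (s : ℝ) - 1) ^ 2 - 2 with hC2
  have hsr : (2:ℝ) ≤ (s:ℝ) := by exact_mod_cast hs
  have hC2pos : 0 < C2 := by rw [hC2]; nlinarith
  have hγ : 0 < 1 - lam * C2 := by
    have h := (lt_div_iff₀ hC2pos).mp hlam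
    linarith
  set η : ℝ := (1 - lam * C2) / (lam + 1) with hη
  have hlam1 : (0:ℝ) < lam + 1 := by linarith
  have hη0 : 0 < η := div_pos hγ hlam1
  have hη1 : η ≤ 1 := by
    rw [hη, div_le_one hlam1]
    nlinarith [mul_pos hlam0 hC2pos]
  refine ⟨4 / η + 2, by positivity, ?_⟩
  intro n hn Ω P hΩ h2 h3 h4 h5 ε hε0 hε1
  have hn2 : (2:ℝ) ≤ (n:ℝ) := by exact_mod_cast le_trans hs hn
  have hNpos : (0:ℝ) < (n:ℝ)^2 := by positivity
  set ρ : ℝ := 1 - (1 - lam * C2) / ((n:ℝ)^2 * (lam+1)) with hρ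
  have hρη : ρ = 1 - η / (n:ℝ)^2 := by
    rw [hρ, hη, div_div]
    ring
  have hρ0 : 0 ≤ ρ := by
    rw [hρη]
    have h1 : η / (n:ℝ)^2 ≤ 1 := by
      rw [div_le_one hNpos]
      nlinarith
    linarith
  have hρexp : ρ ≤ Real.exp (-(η / (n:ℝ)^2)) := by
    rw [hρη]
    have := Real.add_one_le_exp (-(η / (n:ℝ)^2))
    linarith
  have hεne : ε ≠ 0 := ne_of_gt hε0
  have harg1 : (1:ℝ) ≤ 2 * (n:ℝ)^2 / ε := by
    rw [le_div_iff₀ hε0]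
    nlinarith
  have hlognonneg : 0 ≤ Real.log (2 * (n:ℝ)^2 / ε) := Real.log_nonneg harg1
  set t0 : ℕ := ⌈((n:ℝ)^2 / η) * Real.log (2 * (n:ℝ)^2 / ε)⌉₊ with ht0
  have hfin : ∀ t' : ℕ, t0 ≤ t' → 2 * (n:ℝ)^2 * ρ ^ t' ≤ ε := by
    intro t' ht'
    have hcast : ((n:ℝ)^2 / η) * Real.log (2 * (n:ℝ)^2 / ε) ≤ (t' : ℝ) :=
      le_trans (Nat.le_ceil _) (Nat.cast_le.mpr ht')
    have hstep : Real.log (2 * (n:ℝ)^2 / ε) ≤ (t' : ℝ) * (η / (n:ℝ)^2) := by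
      have hpos : (0:ℝ) < η / (n:ℝ)^2 := by positivity
      have := mul_le_mul_of_nonneg_left hcast (le_of_lt hpos)
      have heq : η / (n:ℝ)^2 * (((n:ℝ)^2 / η) * Real.log (2 * (n:ℝ)^2 / ε))
          = Real.log (2 * (n:ℝ)^2 / ε) := by
        have hηne : η ≠ 0 := ne_of_gt hη0
        have hNne : (n:ℝ)^2 ≠ 0 := ne_of_gt hNpos
        field_simp
      rw [heq] at this
      linarith
    have hexp : Real.exp (-(η / (n:ℝ)^2)) ^ t' = Real.exp ((t' : ℝ) * (-(η / (n:ℝ)^2))) := by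
      rw [Real.exp_nat_mul]
    have hmono : Real.exp ((t' : ℝ) * (-(η / (n:ℝ)^2))) ≤
        Real.exp (- Real.log (2 * (n:ℝ)^2 / ε)) := by
      apply Real.exp_le_exp.mpr
      have : (t' : ℝ) * (-(η / (n:ℝ)^2)) = -((t' : ℝ) * (η / (n:ℝ)^2)) := by ring
      rw [this]
      linarith
    have hexplog : Real.exp (- Real.log (2 * (n:ℝ)^2 / ε)) = ε / (2 * (n:ℝ)^2) := by
      rw [Real.exp_neg, Real.exp_log (by positivity), inv_div]
    calc 2 * (n:ℝ)^2 * ρ ^ t'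
        ≤ 2 * (n:ℝ)^2 * Real.exp (-(η / (n:ℝ)^2)) ^ t' := by
          refine mul_le_mul_of_nonneg_left (pow_le_pow_left₀ hρ0 hρexp t') (by positivity)
      _ ≤ 2 * (n:ℝ)^2 * (ε / (2 * (n:ℝ)^2)) := by
          rw [hexp]
          refine mul_le_mul_of_nonneg_left ?_ (by positivity)
          rw [← hexplog]
          exact hmono
      _ = ε := by field_simp
  have hmix : mixingTime Ω P
      (fun T => lam ^ bigCount s T / ∑ T' ∈ Ω, lam ^ bigCount s T') ε ≤ t0 := by
    refine Finset.sup_le (fun x hx => ?_)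
    refine Nat.sInf_le ?_
    intro t' ht'
    have hρ0' : 0 ≤ 1 - (1 - lam * ((2 * (s:ℝ) - 1) ^ 2 - 2)) / ((n:ℝ)^2 * (lam+1)) := by
      rw [← hC2, ← hρ]; exact hρ0
    refine le_trans (tv_bound hs hn hlam0 hΩ h2 h3 h4 h5 hρ0' hx t') ?_
    rw [← hC2, ← hρ]
    exact hfin t' ht'
  -- final numeric estimate
  have hlog2 : (1:ℝ) ≤ 2 * Real.log ((n:ℝ) / ε) := by
    have h2n : (2:ℝ) ≤ (n:ℝ) / ε := by
      rw [le_div_iff₀ hε0]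
      nlinarith
    have := Real.log_le_log (by norm_num : (0:ℝ) < 2) h2n
    have hl2 := Real.log_two_gt_d9
    linarith
  have hlogn : 0 ≤ Real.log ((n:ℝ) / ε) := by linarith
  have hlog4 : Real.log (2 * (n:ℝ)^2 / ε) ≤ 4 * Real.log ((n:ℝ) / ε) := by
    have hineq : 2 * (n:ℝ)^2 / ε ≤ ((n:ℝ) / ε) ^ 4 := by
      rw [div_pow, div_le_div_iff₀ hε0 (by positivity)]
      have hε4 : ε ^ 4 ≤ ε := by
        calc ε ^ 4 ≤ ε ^ 1 := pow_le_pow_of_le_one (le_of_lt hε0) (le_of_lt hε1) (by norm_num)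
          _ = ε := pow_one ε
      have hn4 : 2 * (n:ℝ)^2 ≤ (n:ℝ)^4 := by nlinarith [hn2, sq_nonneg ((n:ℝ) - 2), sq_nonneg ((n:ℝ)^2 - 2)]
      calc 2 * (n:ℝ)^2 * ε ^ 4 ≤ 2 * (n:ℝ)^2 * ε := by
            refine mul_le_mul_of_nonneg_left hε4 (by positivity)
        _ ≤ (n:ℝ)^4 * ε := mul_le_mul_of_nonneg_right hn4 (le_of_lt hε0)
    calc Real.log (2 * (n:ℝ)^2 / ε) ≤ Real.log (((n:ℝ) / ε) ^ 4) :=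
          Real.log_le_log (by positivity) hineq
      _ = 4 * Real.log ((n:ℝ) / ε) := by rw [Real.log_pow]; push_cast; ring
  have ht0r : (t0 : ℝ) ≤ ((n:ℝ)^2 / η) * Real.log (2 * (n:ℝ)^2 / ε) + 1 := by
    have := Nat.ceil_lt_add_one (by positivity :
      (0:ℝ) ≤ ((n:ℝ)^2 / η) * Real.log (2 * (n:ℝ)^2 / ε))
    exact le_of_lt this
  have hnsq : (4:ℝ) ≤ (n:ℝ)^2 := by nlinarith [hn2]
  have hn24 : (n:ℝ)^2 ≤ (n:ℝ)^4 := by nlinarith [hnsq, hNpos]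
  have hn41 : (1:ℝ) ≤ (n:ℝ)^4 := by nlinarith [hnsq, hNpos]
  calc (mixingTime Ω P
      (fun T => lam ^ bigCount s T / ∑ T' ∈ Ω, lam ^ bigCount s T') ε : ℝ)
      ≤ (t0 : ℝ) := by exact_mod_cast hmix
    _ ≤ ((n:ℝ)^2 / η) * Real.log (2 * (n:ℝ)^2 / ε) + 1 := ht0r
    _ ≤ ((n:ℝ)^2 / η) * (4 * Real.log ((n:ℝ) / ε)) + 2 * Real.log ((n:ℝ) / ε) := by
        have h1 : ((n:ℝ)^2 / η) * Real.log (2 * (n:ℝ)^2 / ε)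
            ≤ ((n:ℝ)^2 / η) * (4 * Real.log ((n:ℝ) / ε)) :=
          mul_le_mul_of_nonneg_left hlog4 (by positivity)
        linarith
    _ ≤ (4 / η + 2) * (n:ℝ)^4 * Real.log ((n:ℝ) / ε) := by
        have h1 : ((n:ℝ)^2 / η) * (4 * Real.log ((n:ℝ) / ε))
            ≤ (4 / η) * (n:ℝ)^4 * Real.log ((n:ℝ) / ε) := by
          have : ((n:ℝ)^2 / η) * 4 ≤ (4 / η) * (n:ℝ)^4 := by
            rw [div_mul_eq_mul_div, div_mul_eq_mul_div, div_le_div_iff₀ hη0 hη0]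
            nlinarith
          nlinarith [hlogn]
        have h2' : 2 * Real.log ((n:ℝ) / ε) ≤ 2 * (n:ℝ)^4 * Real.log ((n:ℝ) / ε) := by
          nlinarith [hlogn]
        nlinarith [hlogn]
end

section
/- Let n ≥ 2. For p ∈ (ℤ/nℤ)² let Q(p) = {p, p+(1,0), p+(0,1), p+(1,1)} ⊆ (ℤ/nℤ)² (the 2×2 square at p on the torus). Then for every set U ⊆ (ℤ/nℤ)², the squares Q(p), p ∈ U, are pairwise disjoint if and only if U is an independent set of the king graph G_n on (ℤ/nℤ)². Consequently, U ↦ {(p,2) : p ∈ U} ∪ {(q,1) : q ∉ ⋃_{p∈U} Q(p)} is a bijection from the independent sets of G_n onto the (1,2)-square tilings of the n×n torus. -/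
/-- The king graph on the discrete torus (ℤ/nℤ)²: `u` adjacent to `v` iff `u ≠ v` and
both coordinates of `u − v` lie in `{−1, 0, 1}` (mod n). -/
def kingGraph (n : ℕ) : SimpleGraph (ZMod n × ZMod n) where
  Adj u v := u ≠ v ∧ (u.1 - v.1 = 0 ∨ u.1 - v.1 = 1 ∨ u.1 - v.1 = -1) ∧
      (u.2 - v.2 = 0 ∨ u.2 - v.2 = 1 ∨ u.2 - v.2 = -1)
  symm := by
    constructor
    rintro u v ⟨h, h1, h2⟩
    refine ⟨h.symm, ?_, ?_⟩
    · have e : v.1 - u.1 = -(u.1 - v.1) := by ring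
      rcases h1 with h1 | h1 | h1 <;> rw [e, h1] <;> simp
    · have e : v.2 - u.2 = -(u.2 - v.2) := by ring
      rcases h2 with h2 | h2 | h2 <;> rw [e, h2] <;> simp
  loopless := ⟨fun u h => h.1 rfl⟩

/-- An independent set of a graph: no two of its vertices are adjacent. -/
def IsIndepSet (n : ℕ) (U : Set (ZMod n × ZMod n)) : Prop :=
  ∀ u ∈ U, ∀ v ∈ U, ¬ (kingGraph n).Adj u v

/-- The 2×2 square at `p` on the torus. -/
def Q {n : ℕ} (p : ZMod n × ZMod n) : Set (ZMod n × ZMod n) :=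
  {p, p + (1, 0), p + (0, 1), p + (1, 1)}

/-- The cells covered by a tile `(p,k)` on the torus: `{p}` if `k = 1`,
and the 2×2 square `Q p` if `k = 2`. -/
def torusTile {n : ℕ} (t : (ZMod n × ZMod n) × ℕ) : Set (ZMod n × ZMod n) :=
  if t.2 = 2 then Q t.1 else {t.1}

/-- A (1,2)-square tiling of the n×n torus: tiles `(p,k)` with `k ∈ {1,2}`, pairwise
disjoint, covering the whole torus. -/
def IsTorusTiling (n : ℕ) (T : Set ((ZMod n × ZMod n) × ℕ)) : Prop :=
  (∀ t ∈ T, t.2 = 1 ∨ t.2 = 2) ∧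
  (∀ t ∈ T, ∀ t' ∈ T, t ≠ t' → Disjoint (torusTile t) (torusTile t')) ∧
  (⋃ t ∈ T, torusTile t) = Set.univ

lemma mem_Q {n : ℕ} (x p : ZMod n × ZMod n) :
    x ∈ Q p ↔ (x.1 = p.1 ∨ x.1 = p.1 + 1) ∧ (x.2 = p.2 ∨ x.2 = p.2 + 1) := by
  simp only [Q, Set.mem_insert_iff, Set.mem_singleton_iff, Prod.ext_iff, Prod.fst_add,
    Prod.snd_add]
  norm_num
  tauto

lemma exists1d {n : ℕ} (s t : ZMod n) :
    (∃ a : ZMod n, (a = s ∨ a = s + 1) ∧ (a = t ∨ a = t + 1)) ↔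
      (s - t = 0 ∨ s - t = 1 ∨ s - t = -1) := by
  constructor
  · rintro ⟨a, h1 | h1, h2 | h2⟩ <;> subst h1
    · left; linear_combination h2
    · right; left; linear_combination h2
    · right; right; linear_combination h2
    · left; linear_combination h2
  · rintro (h | h | h)
    · exact ⟨s, Or.inl rfl, Or.inl (by linear_combination h)⟩
    · exact ⟨s, Or.inl rfl, Or.inr (by linear_combination h)⟩
    · exact ⟨t, Or.inr (by linear_combination -h), Or.inl rfl⟩

lemma not_disjoint_Q_iff {n : ℕ} (p q : ZMod n × ZMod n) :
    ¬ Disjoint (Q p) (Q q) ↔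
      ((p.1 - q.1 = 0 ∨ p.1 - q.1 = 1 ∨ p.1 - q.1 = -1) ∧
       (p.2 - q.2 = 0 ∨ p.2 - q.2 = 1 ∨ p.2 - q.2 = -1)) := by
  rw [Set.not_disjoint_iff]
  constructor
  · rintro ⟨x, hx, hy⟩
    rw [mem_Q] at hx hy
    exact ⟨(exists1d p.1 q.1).1 ⟨x.1, hx.1, hy.1⟩, (exists1d p.2 q.2).1 ⟨x.2, hx.2, hy.2⟩⟩
  · rintro ⟨h1, h2⟩
    obtain ⟨a, ha⟩ := (exists1d p.1 q.1).2 h1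
    obtain ⟨b, hb⟩ := (exists1d p.2 q.2).2 h2
    exact ⟨(a, b), (mem_Q _ _).2 ⟨ha.1, hb.1⟩, (mem_Q _ _).2 ⟨ha.2, hb.2⟩⟩

lemma part1 {n : ℕ} (U : Set (ZMod n × ZMod n)) :
    (∀ p ∈ U, ∀ q ∈ U, p ≠ q → Disjoint (Q p) (Q q)) ↔ IsIndepSet n U := by
  constructor
  · intro h u hu v hv hadj
    obtain ⟨hne, h1, h2⟩ := hadj
    exact (not_disjoint_Q_iff u v).2 ⟨h1, h2⟩ (h u hu v hv hne)
  · intro h p hp q hq hne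
    by_contra hd
    exact h p hp q hq ⟨hne, (not_disjoint_Q_iff p q).1 hd⟩

lemma torusTile_two {n : ℕ} (p : ZMod n × ZMod n) : torusTile (p, 2) = Q p := if_pos rfl

lemma torusTile_one {n : ℕ} (p : ZMod n × ZMod n) : torusTile (p, 1) = {p} := if_neg (by norm_num)


/-- For every `U ⊆ (ℤ/nℤ)²`, the 2×2 squares `Q p`, `p ∈ U`, are pairwise disjoint iff
`U` is an independent set of the king graph; consequently
`U ↦ {(p,2) : p ∈ U} ∪ {(q,1) : q ∉ ⋃_{p∈U} Q p}` is a bijection from the independent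
sets of the king graph onto the (1,2)-square tilings of the n×n torus. -/
theorem king_indep_sets_biject_with_torus_tilings (n : ℕ) (hn : 2 ≤ n) :
    (∀ U : Set (ZMod n × ZMod n),
      (∀ p ∈ U, ∀ q ∈ U, p ≠ q → Disjoint (Q p) (Q q)) ↔ IsIndepSet n U) ∧
    Set.BijOn
      (fun U : Set (ZMod n × ZMod n) =>
        ((fun p => (p, 2)) '' U) ∪
        ((fun q => (q, 1)) '' {q | q ∉ ⋃ p ∈ U, Q p}))
      {U | IsIndepSet n U}
      {T | IsTorusTiling n T} := by
  refine ⟨fun U => part1 U, ?_, ?_, ?_⟩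
  · -- MapsTo
    intro U hU
    have hdisj := (part1 U).2 hU
    refine ⟨?_, ?_, ?_⟩
    · rintro t (⟨p, hp, rfl⟩ | ⟨q, hq, rfl⟩)
      · right; rfl
      · left; rfl
    · rintro t (⟨p, hp, rfl⟩ | ⟨p, hp, rfl⟩) t' (⟨q, hq, rfl⟩ | ⟨q, hq, rfl⟩) hne
      · rw [torusTile_two, torusTile_two]
        exact hdisj p hp q hq (fun h => hne (by rw [h]))
      · rw [torusTile_two, torusTile_one, Set.disjoint_singleton_right]
        intro hqQ
        exact hq (Set.mem_biUnion hp hqQ)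
      · rw [torusTile_one, torusTile_two, Set.disjoint_singleton_left]
        intro hpQ
        exact hp (Set.mem_biUnion hq hpQ)
      · rw [torusTile_one, torusTile_one, Set.disjoint_singleton]
        exact fun h => hne (by rw [h])
    · ext x
      simp only [Set.mem_iUnion, Set.mem_univ, iff_true]
      by_cases hx : x ∈ ⋃ p ∈ U, Q p
      · obtain ⟨p, hp, hxp⟩ := Set.mem_iUnion₂.1 hx
        exact ⟨(p, 2), Or.inl ⟨p, hp, rfl⟩, by rw [torusTile_two]; exact hxp⟩
      · exact ⟨(x, 1), Or.inr ⟨x, by simpa using hx, rfl⟩, by rw [torusTile_one]; exact rfl⟩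
  · -- InjOn
    intro U1 _ U2 _ heq
    have key : ∀ (U : Set (ZMod n × ZMod n)) (p : ZMod n × ZMod n),
        p ∈ U ↔ (p, 2) ∈ ((fun p => (p, 2)) '' U) ∪
          ((fun q => (q, (1:ℕ))) '' {q | q ∉ ⋃ p ∈ U, Q p}) := by
      intro U p
      constructor
      · intro hp; exact Or.inl ⟨p, hp, rfl⟩
      · rintro (⟨q, hq, he⟩ | ⟨q, hq, he⟩)
        · simp only [Prod.mk.injEq] at he
          exact he.1 ▸ hq
        · simp only [Prod.mk.injEq] at he
          exact absurd he.2 (by norm_num)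
    simp only at heq
    ext p
    rw [key U1 p, key U2 p, heq]
  · -- SurjOn
    intro T hT
    obtain ⟨hlab, hdis, hcov⟩ := hT
    set U : Set (ZMod n × ZMod n) := {p | (p, 2) ∈ T} with hUdef
    have claimA : ∀ q : ZMod n × ZMod n, (q, 1) ∈ T ↔ q ∉ ⋃ p ∈ U, Q p := by
      intro q
      constructor
      · intro hq1 hq
        obtain ⟨p, hp, hqQ⟩ := Set.mem_iUnion₂.1 hq
        have hne : ((q, 1) : (ZMod n × ZMod n) × ℕ) ≠ (p, 2) := by
          intro h; exact absurd (Prod.ext_iff.1 h).2 (by norm_num)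
        have := hdis _ hq1 _ hp hne
        rw [torusTile_one, torusTile_two] at this
        exact (Set.disjoint_singleton_left.1 this) hqQ
      · intro hq
        have : q ∈ ⋃ t ∈ T, torusTile t := hcov ▸ Set.mem_univ q
        obtain ⟨t, ht, hqt⟩ := Set.mem_iUnion₂.1 this
        rcases hlab t ht with h1 | h2
        · have : t = (t.1, 1) := Prod.ext rfl h1
          rw [this, torusTile_one] at hqt
          rw [Set.mem_singleton_iff] at hqt
          rwa [hqt, ← this]
        · exfalso
          have hteq : t = (t.1, 2) := Prod.ext rfl h2
          have hpU : t.1 ∈ U := by rw [hUdef]; exact Set.mem_setOf.2 (hteq ▸ ht)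
          rw [hteq, torusTile_two] at hqt
          exact hq (Set.mem_biUnion hpU hqt)
    have hUind : IsIndepSet n U := by
      apply (part1 U).1
      intro p hp q hq hne
      have hne' : ((p, 2) : (ZMod n × ZMod n) × ℕ) ≠ (q, 2) := by
        intro h; exact hne (Prod.ext_iff.1 h).1
      have := hdis _ hp _ hq hne'
      rwa [torusTile_two, torusTile_two] at this
    refine ⟨U, hUind, ?_⟩
    ext t
    simp only [Set.mem_union, Set.mem_image, Set.mem_setOf_eq]
    constructor
    · rintro (⟨p, hp, rfl⟩ | ⟨q, hq, rfl⟩)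
      · exact hp
      · exact (claimA q).2 hq
    · intro ht
      rcases hlab t ht with h1 | h2
      · have hteq : t = (t.1, 1) := Prod.ext rfl h1
        right
        exact ⟨t.1, (claimA t.1).1 (hteq ▸ ht), hteq.symm⟩
      · have hteq : t = (t.1, 2) := Prod.ext rfl h2
        left
        exact ⟨t.1, hteq ▸ ht, hteq.symm⟩
end

section
/- Let m, s ≥ 1 be integers with m ≠ s, let p = lcm(m,s), and let R = {0,…,p−1}² ⊆ ℤ² be the p×p square (the central block). Then R has exactly two (m,s)-tilings: the grid of (p/m)² squares of size m, namely {((im, jm), m) : 0 ≤ i, j < p/m}, and the grid of (p/s)² squares of size s, namely {((is, js), s) : 0 ≤ i, j < p/s}. -/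
open Finset

/-- The c×c grid of k×k tiles placed at positions `(ik, jk)`, `0 ≤ i, j < c`. -/
def gridTiling (k c : ℕ) : Finset ((ℤ × ℤ) × ℕ) :=
  (Finset.range c ×ˢ Finset.range c).image
    fun ij => ((((ij.1 * k : ℕ) : ℤ), ((ij.2 * k : ℕ) : ℤ)), k)

lemma mem_sqCells_s9 {q : ℤ × ℤ} {k : ℕ} {z : ℤ × ℤ} :
    z ∈ sqCells q k ↔ q.1 ≤ z.1 ∧ z.1 < q.1 + k ∧ q.2 ≤ z.2 ∧ z.2 < q.2 + k := by
  constructor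
  · intro hz
    simp only [sqCells, Finset.mem_image, Finset.mem_product, Finset.mem_range] at hz
    obtain ⟨⟨i, j⟩, ⟨hi, hj⟩, rfl⟩ := hz
    simp; omega
  · intro hz
    simp only [sqCells, Finset.mem_image, Finset.mem_product, Finset.mem_range]
    refine ⟨((z.1 - q.1).toNat, (z.2 - q.2).toNat), ⟨by omega, by omega⟩, ?_⟩
    obtain ⟨x, y⟩ := z
    simp only [Prod.mk.injEq]
    constructor <;> simp <;> omega

def rectR (w : ℕ) (c : ℤ) (h : ℕ) : Finset (ℤ × ℤ) :=
  (Finset.range w ×ˢ Finset.range h).image fun ij => ((ij.1 : ℤ), c + ij.2)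

lemma mem_rectR {w h : ℕ} {c : ℤ} {z : ℤ × ℤ} :
    z ∈ rectR w c h ↔ 0 ≤ z.1 ∧ z.1 < (w : ℤ) ∧ c ≤ z.2 ∧ z.2 < c + h := by
  constructor
  · intro hz
    simp only [rectR, Finset.mem_image, Finset.mem_product, Finset.mem_range] at hz
    obtain ⟨⟨i, j⟩, ⟨hi, hj⟩, rfl⟩ := hz
    simp; omega
  · intro hz
    simp only [rectR, Finset.mem_image, Finset.mem_product, Finset.mem_range]
    refine ⟨(z.1.toNat, (z.2 - c).toNat), ⟨by omega, by omega⟩, ?_⟩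
    obtain ⟨x, y⟩ := z
    simp only [Prod.mk.injEq]
    constructor <;> simp <;> omega

lemma squareRegion_eq (n : ℕ) : squareRegion n = rectR n 0 n := by
  ext z
  rw [mem_rectR]
  constructor
  · intro hz
    simp only [squareRegion, Finset.mem_image, Finset.mem_product, Finset.mem_range] at hz
    obtain ⟨⟨i, j⟩, ⟨hi, hj⟩, rfl⟩ := hz
    simp; omega
  · intro hz
    simp only [squareRegion, Finset.mem_image, Finset.mem_product, Finset.mem_range]
    refine ⟨(z.1.toNat, z.2.toNat), ⟨by omega, by omega⟩, ?_⟩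
    obtain ⟨x, y⟩ := z
    simp only [Prod.mk.injEq]
    constructor <;> simp <;> omega

lemma lcm_rep {m s : ℕ} (hm : 1 ≤ m) (hs : 1 ≤ s) {a b : ℕ}
    (hab : a * m + b * s = Nat.lcm m s) :
    (b = 0 ∧ a * m = Nat.lcm m s) ∨ (a = 0 ∧ b * s = Nat.lcm m s) := by
  rcases Nat.eq_zero_or_pos b with hb | hb
  · left; exact ⟨hb, by simpa [hb] using hab⟩
  rcases Nat.eq_zero_or_pos a with ha | ha
  · right; exact ⟨ha, by simpa [ha] using hab⟩
  exfalso
  set g := Nat.gcd m s with hg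
  have hgpos : 0 < g := Nat.gcd_pos_of_pos_left _ hm
  set m' := m / g with hm'
  set s' := s / g with hs'
  have hmm : g * m' = m := Nat.mul_div_cancel' (Nat.gcd_dvd_left m s)
  have hss : g * s' = s := Nat.mul_div_cancel' (Nat.gcd_dvd_right m s)
  have hcop : Nat.Coprime m' s' := Nat.coprime_div_gcd_div_gcd hgpos
  have hlcm : Nat.lcm m s = g * (m' * s') := by
    have h1 : g * Nat.lcm m s = m * s := Nat.gcd_mul_lcm m s
    have h2 : m * s = g * (g * (m' * s')) := by rw [← hmm, ← hss]; ring
    have := h1.trans h2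
    exact Nat.eq_of_mul_eq_mul_left hgpos this
  have key : a * m' + b * s' = m' * s' := by
    apply Nat.eq_of_mul_eq_mul_left hgpos
    calc g * (a * m' + b * s') = a * (g * m') + b * (g * s') := by ring
    _ = Nat.lcm m s := by rw [hmm, hss]; exact hab
    _ = g * (m' * s') := hlcm
  have hm'pos : 0 < m' := by
    rcases Nat.eq_zero_or_pos m' with h | h
    · exfalso; rw [h, Nat.mul_zero] at hmm; omega
    · exact h
  have hs'pos : 0 < s' := by
    rcases Nat.eq_zero_or_pos s' with h | h
    · exfalso; rw [h, Nat.mul_zero] at hss; omega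
    · exact h
  have hdvd : s' ∣ a * m' := by
    have h1 : s' ∣ a * m' + b * s' := key ▸ Dvd.intro_left m' rfl
    have h2 : s' ∣ b * s' := Dvd.intro_left b rfl
    simpa using Nat.dvd_sub h1 h2
  have hdvd' : s' ∣ a := (Nat.Coprime.dvd_of_dvd_mul_right hcop.symm) hdvd
  have h1 : s' ≤ a := Nat.le_of_dvd ha hdvd'
  have h2 : s' * m' ≤ a * m' := Nat.mul_le_mul_right _ h1
  have h3 : s' ≤ b * s' := Nat.le_mul_of_pos_left _ hb
  have h4 : m' * s' = s' * m' := Nat.mul_comm _ _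
  omega

set_option maxHeartbeats 4000000 in
lemma strip_step {m s : ℕ} (hm : 1 ≤ m) (hs : 1 ≤ s) (c : ℤ) (h : ℕ) (hh : 0 < h)
    {T : Finset ((ℤ × ℤ) × ℕ)} (hT : IsTiling m s (rectR (Nat.lcm m s) c h) T) :
    ∃ k, (k = m ∨ k = s) ∧ 0 < k ∧ k ≤ h ∧
      T.filter (fun t => t.1.2 = c) =
        (Finset.range (Nat.lcm m s / k)).image (fun j => ((((j * k : ℕ) : ℤ), c), k)) ∧
      IsTiling m s (rectR (Nat.lcm m s) (c + k) (h - k)) (T.filter (fun t => ¬ t.1.2 = c)) := by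
  obtain ⟨hsz, hdisj, hun⟩ := hT
  set p := Nat.lcm m s with hp
  have hppos : 0 < p := Nat.pos_of_ne_zero (Nat.lcm_ne_zero (by omega) (by omega))
  have hkpos : ∀ t ∈ T, 0 < t.2 := fun t ht => by rcases hsz t ht with h | h <;> omega
  have hsub : ∀ t ∈ T, sqCells t.1 t.2 ⊆ rectR p c h := fun t ht =>
    hun ▸ Finset.subset_biUnion_of_mem (fun t => sqCells t.1 t.2) ht
  have hbnd : ∀ t ∈ T, 0 ≤ t.1.1 ∧ t.1.1 + t.2 ≤ (p : ℤ) ∧ c ≤ t.1.2 ∧ t.1.2 + t.2 ≤ c + h := by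
    intro t ht
    have h0 : 0 < t.2 := hkpos t ht
    have h1 : t.1 ∈ rectR p c h := hsub t ht (mem_sqCells_s9.2 (by omega))
    have h2 : (t.1.1 + t.2 - 1, t.1.2 + t.2 - 1) ∈ rectR p c h :=
      hsub t ht (mem_sqCells_s9.2 (by dsimp only; omega))
    rw [mem_rectR] at h1 h2
    dsimp only at h1 h2
    omega
  have hcov : ∀ z ∈ rectR p c h, ∃ t ∈ T, z ∈ sqCells t.1 t.2 := by
    intro z hz
    rw [← hun] at hz
    simpa using hz
  have huniq : ∀ t ∈ T, ∀ t' ∈ T, ∀ z, z ∈ sqCells t.1 t.2 → z ∈ sqCells t'.1 t'.2 → t = t' := by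
    intro t ht t' ht' z h1 h2
    by_contra hne
    exact (Finset.disjoint_left.1 (hdisj t ht t' ht' hne)) h1 h2
  set B := T.filter (fun t => t.1.2 = c) with hB
  have hbot : ∀ x : ℤ, 0 ≤ x → x < (p : ℤ) →
      ∃ t ∈ B, t.1.1 ≤ x ∧ x < t.1.1 + t.2 ∧ t.1.2 = c := by
    intro x h0 h1
    obtain ⟨t, ht, hzt⟩ := hcov (x, c) (mem_rectR.2 (by dsimp only; omega))
    rw [mem_sqCells_s9] at hzt
    dsimp only at hzt
    have hb := hbnd t ht
    have hc : t.1.2 = c := by omega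
    exact ⟨t, Finset.mem_filter.2 ⟨ht, hc⟩, by omega, by omega, hc⟩
  -- sum of sizes of bottom tiles is p
  have hdisjB : ∀ t ∈ B, ∀ t' ∈ B, t ≠ t' →
      Disjoint ((Finset.range t.2).image (fun i : ℕ => t.1.1 + (i : ℤ)))
        ((Finset.range t'.2).image (fun i : ℕ => t'.1.1 + (i : ℤ))) := by
    intro t ht t' ht' hne
    rw [Finset.disjoint_left]
    rintro x hx hx'
    simp only [Finset.mem_image, Finset.mem_range] at hx hx'
    obtain ⟨i, hi, rfl⟩ := hx
    obtain ⟨i', hi', hxe⟩ := hx'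
    have htf := Finset.mem_filter.1 ht
    have htf' := Finset.mem_filter.1 ht'
    have hk1 := hkpos t htf.1
    have hk2 := hkpos t' htf'.1
    apply hne
    apply huniq t htf.1 t' htf'.1 (t.1.1 + (i : ℤ), c) <;> rw [mem_sqCells_s9] <;> dsimp only
    · have := htf.2; omega
    · have := htf'.2; omega
  have hsum : ∑ t ∈ B, t.2 = p := by
    have key : B.biUnion (fun t => (Finset.range t.2).image (fun i : ℕ => t.1.1 + (i : ℤ))) =
        (Finset.range p).image (fun i : ℕ => (i : ℤ)) := by
      ext x
      simp only [Finset.mem_biUnion, Finset.mem_image, Finset.mem_range]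
      constructor
      · rintro ⟨t, ht, i, hi, rfl⟩
        have hb := hbnd t (Finset.mem_filter.1 ht).1
        exact ⟨(t.1.1 + (i : ℤ)).toNat, by omega, by omega⟩
      · rintro ⟨i, hi, rfl⟩
        obtain ⟨t, ht, h1, h2, _⟩ := hbot (i : ℤ) (by omega) (by omega)
        exact ⟨t, ht, ((i : ℤ) - t.1.1).toNat, by omega, by omega⟩
    calc ∑ t ∈ B, t.2
        = ∑ t ∈ B, ((Finset.range t.2).image (fun i : ℕ => t.1.1 + (i : ℤ))).card := by
          apply Finset.sum_congr rfl
          intro t _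
          rw [Finset.card_image_of_injective _
            (fun a b hab => by simpa using hab : Function.Injective (fun i : ℕ => t.1.1 + (i : ℤ))),
            Finset.card_range]
      _ = (B.biUnion (fun t => (Finset.range t.2).image (fun i : ℕ => t.1.1 + (i : ℤ)))).card :=
          (Finset.card_biUnion hdisjB).symm
      _ = p := by
          rw [key, Finset.card_image_of_injective _ Nat.cast_injective, Finset.card_range]
  -- all bottom tiles have the same size k
  obtain ⟨k, hk, hallB⟩ : ∃ k, (k = m ∨ k = s) ∧ ∀ t ∈ B, t.2 = k := by
    have hsplit := Finset.sum_filter_add_sum_filter_not B (fun t => t.2 = m) (fun t => t.2)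
    have h1 : ∑ t ∈ B.filter (fun t => t.2 = m), t.2 = (B.filter (fun t => t.2 = m)).card * m := by
      rw [Finset.sum_congr rfl (fun t ht => (Finset.mem_filter.1 ht).2), Finset.sum_const,
        smul_eq_mul]
    have h2 : ∑ t ∈ B.filter (fun t => ¬t.2 = m), t.2 =
        (B.filter (fun t => ¬t.2 = m)).card * s := by
      rw [Finset.sum_congr rfl (fun t ht => ?_), Finset.sum_const, smul_eq_mul]
      have := Finset.mem_filter.1 ht
      rcases hsz t (Finset.mem_filter.1 this.1).1 with h | h
      · exact absurd h this.2
      · exact h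
    have hrep : (B.filter (fun t => t.2 = m)).card * m +
        (B.filter (fun t => ¬t.2 = m)).card * s = Nat.lcm m s := by
      rw [← h1, ← h2, hsplit]; exact hsum
    rcases lcm_rep hm hs hrep with ⟨hz, _⟩ | ⟨hz, _⟩
    · refine ⟨m, Or.inl rfl, fun t ht => ?_⟩
      by_contra hne
      have : t ∈ B.filter (fun t => ¬t.2 = m) := Finset.mem_filter.2 ⟨ht, hne⟩
      rw [Finset.card_eq_zero.1 hz] at this
      exact absurd this (Finset.notMem_empty t)
    · refine ⟨s, Or.inr rfl, fun t ht => ?_⟩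
      rcases hsz t (Finset.mem_filter.1 ht).1 with h | h
      · exfalso
        have : t ∈ B.filter (fun t => t.2 = m) := Finset.mem_filter.2 ⟨ht, h⟩
        rw [Finset.card_eq_zero.1 hz] at this
        exact absurd this (Finset.notMem_empty t)
      · exact h
  have hkpos' : 0 < k := by rcases hk with e | e <;> omega
  have hkp : k ∣ p := by
    rcases hk with e | e
    · rw [e]; exact Nat.dvd_lcm_left m s
    · rw [e]; exact Nat.dvd_lcm_right m s
  have hpkk : p / k * k = p := Nat.div_mul_cancel hkp
  have hsumk : B.card * k = p := by
    rw [← hsum, Finset.sum_congr rfl hallB, Finset.sum_const, smul_eq_mul]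
  -- positions of bottom tiles: multiples of k
  have hpos : ∀ j : ℕ, j < p / k → ((((j * k : ℕ) : ℤ), c), k) ∈ B := by
    intro j
    induction j using Nat.strong_induction_on with
    | _ j IH =>
    intro hj
    have hj1 : (j + 1) * k ≤ p / k * k := Nat.mul_le_mul_right _ (by omega)
    rw [hpkk] at hj1
    have hj2 : (j + 1) * k = j * k + k := by ring
    have hjk : j * k < p := by omega
    obtain ⟨t, htB, h1, h2, h3⟩ := hbot ((j * k : ℕ) : ℤ) (by omega) (by exact_mod_cast hjk)
    have htk : t.2 = k := hallB t htB
    have htT : t ∈ T := (Finset.mem_filter.1 htB).1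
    have hb := hbnd t htT
    by_cases hcase : t.1.1 = ((j * k : ℕ) : ℤ)
    · have ht : t = ((((j * k : ℕ) : ℤ), c), k) := by
        obtain ⟨⟨a, b⟩, kk⟩ := t
        dsimp only at hcase h3 htk
        rw [hcase, h3, htk]
      rwa [← ht]
    · exfalso
      have ha : 0 ≤ t.1.1 := hb.1
      obtain ⟨q, r, hqr, hrk⟩ : ∃ q r, k * q + r = t.1.1.toNat ∧ r < k :=
        ⟨t.1.1.toNat / k, t.1.1.toNat % k, Nat.div_add_mod _ _, Nat.mod_lt _ hkpos'⟩
      have hcomm : q * k = k * q := Nat.mul_comm q k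
      have hqj : q < j := by
        by_contra hle
        push_neg at hle
        have hmul : k * j ≤ k * q := Nat.mul_le_mul_left k hle
        have hjj : j * k = k * j := Nat.mul_comm j k
        omega
      have hqp : q < p / k := by
        by_contra hle
        push_neg at hle
        have hmul : p / k * k ≤ q * k := Nat.mul_le_mul_right k hle
        rw [hpkk] at hmul
        omega
      have ht' := IH q hqj hqp
      have htT' : ((((q * k : ℕ) : ℤ), c), k) ∈ T := (Finset.mem_filter.1 ht').1
      have heq : t = ((((q * k : ℕ) : ℤ), c), k) := by
        apply huniq t htT _ htT' (t.1.1, c) <;> rw [mem_sqCells_s9] <;> dsimp only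
        · omega
        · omega
      rw [heq] at h1 h2
      dsimp only at h1 h2
      have hle : (q + 1) * k ≤ j * k := Nat.mul_le_mul_right _ (by omega)
      have hexp : (q + 1) * k = q * k + k := by ring
      omega
  have hBcard : B.card = p / k := by
    have := hsumk
    exact Nat.eq_of_mul_eq_mul_right hkpos' (by omega)
  have hBeq : B = (Finset.range (p / k)).image (fun j => ((((j * k : ℕ) : ℤ), c), k)) := by
    symm
    apply Finset.eq_of_subset_of_card_le
    · intro t ht
      simp only [Finset.mem_image, Finset.mem_range] at ht
      obtain ⟨j, hj, rfl⟩ := ht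
      exact hpos j hj
    · rw [Finset.card_image_of_injective _ ?_, Finset.card_range, hBcard]
      intro a b hab
      simp only [Prod.mk.injEq] at hab
      have : ((a * k : ℕ) : ℤ) = ((b * k : ℕ) : ℤ) := hab.1.1
      have h2 : a * k = b * k := by exact_mod_cast this
      exact Nat.eq_of_mul_eq_mul_right hkpos' h2
  have hk_le : k ≤ h := by
    have hpk0 : 0 < p / k := Nat.div_pos (Nat.le_of_dvd hppos hkp) hkpos'
    have h0 := hpos 0 hpk0
    have := hbnd _ (Finset.mem_filter.1 h0).1
    dsimp only at this
    omega
  have hhigh : ∀ t ∈ T, ¬ t.1.2 = c → c + k ≤ t.1.2 := by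
    intro t htT hne
    by_contra hlt
    push_neg at hlt
    have hb := hbnd t htT
    have hk1 := hkpos t htT
    obtain ⟨q, r, hqr, hrk⟩ : ∃ q r, k * q + r = t.1.1.toNat ∧ r < k :=
      ⟨t.1.1.toNat / k, t.1.1.toNat % k, Nat.div_add_mod _ _, Nat.mod_lt _ hkpos'⟩
    have hcomm : q * k = k * q := Nat.mul_comm q k
    have hqp : q < p / k := by
      by_contra hle
      push_neg at hle
      have hmul : p / k * k ≤ q * k := Nat.mul_le_mul_right k hle
      rw [hpkk] at hmul
      omega
    have ht' := hpos q hqp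
    have htT' : ((((q * k : ℕ) : ℤ), c), k) ∈ T := (Finset.mem_filter.1 ht').1
    have heq : t = ((((q * k : ℕ) : ℤ), c), k) := by
      apply huniq t htT _ htT' (t.1.1, t.1.2) <;> rw [mem_sqCells_s9] <;> dsimp only
      · omega
      · omega
    apply hne
    rw [heq]
  refine ⟨k, hk, hkpos', hk_le, hBeq, ?_, ?_, ?_⟩
  · intro t ht
    exact hsz t (Finset.mem_filter.1 ht).1
  · intro t ht t' ht' hne
    exact hdisj t (Finset.mem_filter.1 ht).1 t' (Finset.mem_filter.1 ht').1 hne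
  · ext z
    simp only [Finset.mem_biUnion, Finset.mem_filter]
    rw [mem_rectR]
    constructor
    · rintro ⟨t, ⟨htT, hne⟩, hz⟩
      have hb := hbnd t htT
      have hy := hhigh t htT hne
      rw [mem_sqCells_s9] at hz
      omega
    · intro hz
      have hz' : z ∈ rectR p c h := mem_rectR.2 (by omega)
      obtain ⟨t, htT, hzt⟩ := hcov z hz'
      refine ⟨t, ⟨htT, ?_⟩, hzt⟩
      intro hc
      have htB : t ∈ B := Finset.mem_filter.2 ⟨htT, hc⟩
      rw [hBeq] at htB
      simp only [Finset.mem_image, Finset.mem_range] at htB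
      obtain ⟨j, hj, hje⟩ := htB
      rw [mem_sqCells_s9] at hzt
      have h2 : t.2 = k := by rw [← hje]
      omega

lemma empty_case {m s : ℕ} (hm : 1 ≤ m) (hs : 1 ≤ s) (c : ℤ) {T : Finset ((ℤ × ℤ) × ℕ)}
    (hT : IsTiling m s (rectR (Nat.lcm m s) c 0) T) : T = ∅ := by
  obtain ⟨hsz, _, hun⟩ := hT
  rw [Finset.eq_empty_iff_forall_notMem]
  intro t htT
  have hkpos : 0 < t.2 := by rcases hsz t htT with e | e <;> omega
  have h0 : t.1 ∈ sqCells t.1 t.2 := by rw [mem_sqCells_s9]; omega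
  have h1 : t.1 ∈ rectR (Nat.lcm m s) c 0 := by
    rw [← hun]; exact Finset.mem_biUnion.2 ⟨t, htT, h0⟩
  rw [mem_rectR] at h1
  omega

lemma rect_rep {m s : ℕ} (hm : 1 ≤ m) (hs : 1 ≤ s) (hms : m ≠ s) :
    ∀ h : ℕ, ∀ c : ℤ, ∀ T : Finset ((ℤ × ℤ) × ℕ),
      IsTiling m s (rectR (Nat.lcm m s) c h) T →
      ∃ a b : ℕ, a * m + b * s = h ∧
        ((∃ t ∈ T, t.2 = m) → 0 < a) ∧ ((∃ t ∈ T, t.2 = s) → 0 < b) := by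
  intro h
  induction h using Nat.strong_induction_on with
  | _ h IH =>
  intro c T hT
  rcases Nat.eq_zero_or_pos h with rfl | hh
  · rw [empty_case hm hs c hT]
    exact ⟨0, 0, by ring, by rintro ⟨t, ht, -⟩; exact absurd ht (Finset.notMem_empty t),
      by rintro ⟨t, ht, -⟩; exact absurd ht (Finset.notMem_empty t)⟩
  · obtain ⟨k, hk, hkpos, hkh, hBeq, hT'⟩ := strip_step hm hs c h hh hT
    obtain ⟨a', b', hab, ha', hb'⟩ := IH (h - k) (by omega) (c + k) _ hT'
    have hbotk : ∀ t ∈ T, t.1.2 = c → t.2 = k := by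
      intro t htT hc
      have hmem : t ∈ T.filter (fun t => t.1.2 = c) := Finset.mem_filter.2 ⟨htT, hc⟩
      rw [hBeq] at hmem
      simp only [Finset.mem_image, Finset.mem_range] at hmem
      obtain ⟨j, _, hje⟩ := hmem
      rw [← hje]
    rcases hk with e | e
    · refine ⟨a' + 1, b', by rw [e] at hkh hab; have hexp : (a' + 1) * m = a' * m + m := (by ring); omega, fun _ => by omega, ?_⟩
      rintro ⟨t, htT, hts⟩
      apply hb'
      refine ⟨t, Finset.mem_filter.2 ⟨htT, ?_⟩, hts⟩
      intro hc
      exact hms (by rw [← e, ← hbotk t htT hc, hts])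
    · refine ⟨a', b' + 1, by rw [e] at hkh hab; have hexp : (b' + 1) * s = b' * s + s := (by ring); omega, ?_, fun _ => by omega⟩
      rintro ⟨t, htT, hts⟩
      apply ha'
      refine ⟨t, Finset.mem_filter.2 ⟨htT, ?_⟩, hts⟩
      intro hc
      exact hms (by rw [← e, ← hbotk t htT hc, hts])

lemma rect_uniform {m s : ℕ} (hm : 1 ≤ m) (hs : 1 ≤ s) {k : ℕ} (hkpos : 0 < k) :
    ∀ h : ℕ, ∀ c : ℤ, ∀ T : Finset ((ℤ × ℤ) × ℕ),
      IsTiling m s (rectR (Nat.lcm m s) c h) T → (∀ t ∈ T, t.2 = k) →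
      ∃ r : ℕ, h = r * k ∧
        T = ((Finset.range (Nat.lcm m s / k)) ×ˢ (Finset.range r)).image
          (fun ij => ((((ij.1 * k : ℕ) : ℤ), c + ((ij.2 * k : ℕ) : ℤ)), k)) := by
  intro h
  induction h using Nat.strong_induction_on with
  | _ h IH =>
  intro c T hT hall
  have hppos : 0 < Nat.lcm m s := Nat.pos_of_ne_zero (Nat.lcm_ne_zero (by omega) (by omega))
  rcases Nat.eq_zero_or_pos h with rfl | hh
  · refine ⟨0, by ring, ?_⟩
    rw [empty_case hm hs c hT]
    simp
  · obtain ⟨k', hk', hk'pos, hkh, hBeq, hT'⟩ := strip_step hm hs c h hh hT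
    have hk'dvd : k' ∣ Nat.lcm m s := by
      rcases hk' with e | e
      · rw [e]; exact Nat.dvd_lcm_left m s
      · rw [e]; exact Nat.dvd_lcm_right m s
    have hpk0 : 0 < Nat.lcm m s / k' := Nat.div_pos (Nat.le_of_dvd hppos hk'dvd) hk'pos
    have hbot0 : ((((0 * k' : ℕ) : ℤ), c), k') ∈ T := by
      have : ((((0 * k' : ℕ) : ℤ), c), k') ∈ T.filter (fun t => t.1.2 = c) := by
        rw [hBeq]
        exact Finset.mem_image.2 ⟨0, Finset.mem_range.2 hpk0, rfl⟩
      exact (Finset.mem_filter.1 this).1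
    have hkk : k' = k := hall _ hbot0
    rw [hkk] at hBeq hT' hkh
    obtain ⟨r', hr', hTeq'⟩ := IH (h - k) (by omega) (c + k) _ hT'
      (fun t ht => hall t (Finset.mem_filter.1 ht).1)
    refine ⟨r' + 1, by have : (r' + 1) * k = r' * k + k := (by ring); omega, ?_⟩
    rw [← Finset.filter_union_filter_not_eq (fun t => t.1.2 = c) T, hBeq, hTeq']
    ext t
    simp only [Finset.mem_union, Finset.mem_image, Finset.mem_range, Finset.mem_product,
      Prod.exists]
    constructor
    · rintro (⟨j, hj, hje⟩ | ⟨a, b, ⟨ha, hb⟩, hje⟩)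
      · refine ⟨j, 0, ⟨hj, by omega⟩, ?_⟩
        rw [← hje]
        simp
      · refine ⟨a, b + 1, ⟨ha, by omega⟩, ?_⟩
        rw [← hje]
        simp only [Prod.mk.injEq]
        refine ⟨⟨trivial, ?_⟩, trivial⟩
        push_cast
        ring
    · rintro ⟨a, b, ⟨ha, hb⟩, hje⟩
      rcases Nat.eq_zero_or_pos b with rfl | hb0
      · left
        refine ⟨a, ha, ?_⟩
        rw [← hje]
        simp
      · right
        refine ⟨a, b - 1, ⟨ha, by omega⟩, ?_⟩
        rw [← hje]
        simp only [Prod.mk.injEq]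
        refine ⟨⟨trivial, ?_⟩, trivial⟩
        have : b - 1 + 1 = b := by omega
        rw [← this]
        push_cast
        ring

lemma grid_isTiling {m s k : ℕ} (hm : 1 ≤ m) (hs : 1 ≤ s) (hk : k = m ∨ k = s) :
    IsTiling m s (squareRegion (Nat.lcm m s)) (gridTiling k (Nat.lcm m s / k)) := by
  have hkpos : 0 < k := by rcases hk with e | e <;> omega
  have hppos : 0 < Nat.lcm m s := Nat.pos_of_ne_zero (Nat.lcm_ne_zero (by omega) (by omega))
  have hkdvd : k ∣ Nat.lcm m s := by
    rcases hk with e | e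
    · rw [e]; exact Nat.dvd_lcm_left m s
    · rw [e]; exact Nat.dvd_lcm_right m s
  have hpkk : Nat.lcm m s / k * k = Nat.lcm m s := Nat.div_mul_cancel hkdvd
  refine ⟨?_, ?_, ?_⟩
  · intro t ht
    simp only [gridTiling, Finset.mem_image, Finset.mem_product, Finset.mem_range] at ht
    obtain ⟨ij, _, rfl⟩ := ht
    exact hk
  · intro t ht t' ht' hne
    simp only [gridTiling, Finset.mem_image, Finset.mem_product, Finset.mem_range] at ht ht'
    obtain ⟨⟨a, b⟩, ⟨ha, hb⟩, rfl⟩ := ht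
    obtain ⟨⟨a', b'⟩, ⟨ha', hb'⟩, rfl⟩ := ht'
    rw [Finset.disjoint_left]
    intro z hz hz'
    rw [mem_sqCells_s9] at hz hz'
    dsimp only at hz hz'
    apply hne
    have hxx : a = a' := by
      by_contra hne'
      rcases Nat.lt_or_ge a a' with hlt | hge
      · have h1 : (a + 1) * k ≤ a' * k := Nat.mul_le_mul_right k hlt
        have h2 : (a + 1) * k = a * k + k := by ring
        omega
      · have hlt : a' < a := by omega
        have h1 : (a' + 1) * k ≤ a * k := Nat.mul_le_mul_right k hlt
        have h2 : (a' + 1) * k = a' * k + k := by ring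
        omega
    have hyy : b = b' := by
      by_contra hne'
      rcases Nat.lt_or_ge b b' with hlt | hge
      · have h1 : (b + 1) * k ≤ b' * k := Nat.mul_le_mul_right k hlt
        have h2 : (b + 1) * k = b * k + k := by ring
        omega
      · have hlt : b' < b := by omega
        have h1 : (b' + 1) * k ≤ b * k := Nat.mul_le_mul_right k hlt
        have h2 : (b' + 1) * k = b' * k + k := by ring
        omega
    rw [hxx, hyy]
  · ext z
    rw [squareRegion_eq, mem_rectR]
    simp only [Finset.mem_biUnion]
    constructor
    · rintro ⟨t, ht, hz⟩
      simp only [gridTiling, Finset.mem_image, Finset.mem_product, Finset.mem_range] at ht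
      obtain ⟨⟨a, b⟩, ⟨ha, hb⟩, rfl⟩ := ht
      rw [mem_sqCells_s9] at hz
      dsimp only at hz
      have h1 : (a + 1) * k ≤ Nat.lcm m s / k * k := Nat.mul_le_mul_right k ha
      have h2 : (a + 1) * k = a * k + k := by ring
      have h3 : (b + 1) * k ≤ Nat.lcm m s / k * k := Nat.mul_le_mul_right k hb
      have h4 : (b + 1) * k = b * k + k := by ring
      omega
    · intro hz
      obtain ⟨qa, ra, hqa, hra⟩ : ∃ q r, k * q + r = z.1.toNat ∧ r < k :=
        ⟨_, _, Nat.div_add_mod _ _, Nat.mod_lt _ hkpos⟩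
      obtain ⟨qb, rb, hqb, hrb⟩ : ∃ q r, k * q + r = z.2.toNat ∧ r < k :=
        ⟨_, _, Nat.div_add_mod _ _, Nat.mod_lt _ hkpos⟩
      have hqa' : qa < Nat.lcm m s / k := by
        by_contra hle
        push_neg at hle
        have h1 : Nat.lcm m s / k * k ≤ qa * k := Nat.mul_le_mul_right k hle
        have h2 : qa * k = k * qa := Nat.mul_comm _ _
        omega
      have hqb' : qb < Nat.lcm m s / k := by
        by_contra hle
        push_neg at hle
        have h1 : Nat.lcm m s / k * k ≤ qb * k := Nat.mul_le_mul_right k hle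
        have h2 : qb * k = k * qb := Nat.mul_comm _ _
        omega
      refine ⟨((((qa * k : ℕ) : ℤ), ((qb * k : ℕ) : ℤ)), k), ?_, ?_⟩
      · simp only [gridTiling]
        exact Finset.mem_image.2 ⟨(qa, qb),
          Finset.mem_product.2 ⟨Finset.mem_range.2 hqa', Finset.mem_range.2 hqb'⟩, rfl⟩
      · rw [mem_sqCells_s9]
        dsimp only
        have h2 : qa * k = k * qa := Nat.mul_comm _ _
        have h3 : qb * k = k * qb := Nat.mul_comm _ _
        omega

/-- The central block, the p×p square with `p = lcm(m,s)`, has exactly two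
(m,s)-tilings: the grid of (p/m)² squares of size m and the grid of (p/s)² squares of
size s. -/
theorem central_block_has_two_tilings (m s : ℕ) (hm : 1 ≤ m) (hs : 1 ≤ s) (hms : m ≠ s) :
    {T | IsTiling m s (squareRegion (Nat.lcm m s)) T} =
      {gridTiling m (Nat.lcm m s / m), gridTiling s (Nat.lcm m s / s)} := by
  ext T
  simp only [Set.mem_setOf_eq, Set.mem_insert_iff, Set.mem_singleton_iff]
  constructor
  · intro hT
    rw [squareRegion_eq] at hT
    obtain ⟨a, b, hab, hA, hB⟩ := rect_rep hm hs hms (Nat.lcm m s) 0 T hT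
    rcases lcm_rep hm hs hab with ⟨hb0, _⟩ | ⟨ha0, _⟩
    · left
      have hall : ∀ t ∈ T, t.2 = m := by
        intro t ht
        rcases hT.1 t ht with e | e
        · exact e
        · exfalso; have := hB ⟨t, ht, e⟩; omega
      obtain ⟨r, hr, hTeq⟩ := rect_uniform hm hs hm (Nat.lcm m s) 0 T hT hall
      have hrm : r = Nat.lcm m s / m := by
        have hmk : Nat.lcm m s / m * m = Nat.lcm m s := Nat.div_mul_cancel (Nat.dvd_lcm_left m s)
        exact Nat.eq_of_mul_eq_mul_right hm (by omega)
      rw [hTeq, hrm]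
      simp only [gridTiling]
      apply Finset.image_congr
      intro x _
      simp
    · right
      have hall : ∀ t ∈ T, t.2 = s := by
        intro t ht
        rcases hT.1 t ht with e | e
        · exfalso; have := hA ⟨t, ht, e⟩; omega
        · exact e
      obtain ⟨r, hr, hTeq⟩ := rect_uniform hm hs hs (Nat.lcm m s) 0 T hT hall
      have hrs : r = Nat.lcm m s / s := by
        have hsk : Nat.lcm m s / s * s = Nat.lcm m s := Nat.div_mul_cancel (Nat.dvd_lcm_right m s)
        exact Nat.eq_of_mul_eq_mul_right hs (by omega)
      rw [hTeq, hrs]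
      simp only [gridTiling]
      apply Finset.image_congr
      intro x _
      simp
  · rintro (rfl | rfl)
    · exact grid_isTiling hm hs (Or.inl rfl)
    · exact grid_isTiling hm hs (Or.inr rfl)
end

section
/- Let m, s ≥ 2 be integers with gcd(m,s) = 1. The only pair (a,b) of nonnegative integers satisfying a·m² + b·s² = m·s·(m+s) is (a,b) = (s, m). -/
/-- For coprime integers `m, s ≥ 2`, the only pair `(a,b)` of nonnegative integers with
`a·m² + b·s² = m·s·(m+s)` is `(s, m)`. -/
theorem area_equation_horizontal_block (m s : ℕ) (hm : 2 ≤ m) (hs : 2 ≤ s)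
    (hcop : Nat.Coprime m s) (a b : ℕ) :
    a * m ^ 2 + b * s ^ 2 = m * s * (m + s) ↔ a = s ∧ b = m := by
  constructor
  · intro h
    have hz : (a:ℤ) * m ^ 2 + b * s ^ 2 = m * s * (m + s) := by exact_mod_cast h
    have hm' : (2:ℤ) ≤ m := by exact_mod_cast hm
    have hs' : (2:ℤ) ≤ s := by exact_mod_cast hs
    have ha : (0:ℤ) ≤ a := Int.ofNat_nonneg a
    have hb : (0:ℤ) ≤ b := Int.ofNat_nonneg b
    have key : ((b:ℤ) - m) * s ^ 2 = m ^ 2 * ((s:ℤ) - a) := by ring_nf; linarith [hz]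
    have hcop2 : IsCoprime ((m:ℤ) ^ 2) ((s:ℤ) ^ 2) :=
      (Nat.isCoprime_iff_coprime.mpr hcop).pow
    have hdvd : ((m:ℤ) ^ 2) ∣ ((b:ℤ) - m) :=
      hcop2.dvd_of_dvd_mul_right ⟨(s:ℤ) - a, key⟩
    have habs : |(b:ℤ) - m| < (m:ℤ) ^ 2 := by
      rw [abs_lt]
      have hupper : ((b:ℤ) - m) * s ^ 2 ≤ m ^ 2 * s := by nlinarith
      constructor
      · nlinarith
      · by_contra hc
        push_neg at hc
        have h1 : (m:ℤ) ^ 2 * s ^ 2 ≤ ((b:ℤ) - m) * s ^ 2 :=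
          mul_le_mul_of_nonneg_right hc (by positivity)
        nlinarith [mul_pos (show (0:ℤ) < (m:ℤ) ^ 2 by positivity)
          (show (0:ℤ) < (s:ℤ) ^ 2 - s by nlinarith)]
    have hbm : (b:ℤ) - m = 0 := Int.eq_zero_of_abs_lt_dvd hdvd habs
    have hb' : b = m := by omega
    have ha' : a = s := by
      have : (a:ℤ) * m ^ 2 = s * m ^ 2 := by
        rw [hb'] at hz; nlinarith
      have hmm : (0:ℤ) < (m:ℤ) ^ 2 := by positivity
      have := mul_right_cancel₀ (ne_of_gt hmm) this
      exact_mod_cast this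
    exact ⟨ha', hb'⟩
  · rintro ⟨rfl, rfl⟩; ring
end
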